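/- arXiv:1006.0714 — 3 statements merged into one kernel-verified Lean document; each statement's English description precedes it below -/
import Mathlib

section
/- Let L be a finite, connected (strongly connected via shared edges), pure 2-dimensional, non-branching simplicial complex. Then f^1(L) ≥ (f^2(L) − 1) + (f^0(L) − 1), i.e. the number of edges is at least the number of triangles plus the number of vertices minus 2. Consequently χ(L) = f^0 − f^1 + f^2 ≤ 2. -/
open Finset

variable {V : Type*} [DecidableEq V]

/-- A finite abstract simplicial complex: a finite collection of finite subsets
closed under taking subsets. -/
def IsComplex (Δ : Finset (Finset V)) : Prop :=
  ∀ σ ∈ Δ, ∀ τ ⊆ σ, τ ∈ Δ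

/-- The link of a simplex `τ`. -/
def lkS (Δ : Finset (Finset V)) (τ : Finset V) : Finset (Finset V) :=
  Δ.filter fun σ => σ ∩ τ = ∅ ∧ σ ∪ τ ∈ Δ

/-- The link of a vertex `v`. -/
def lk (Δ : Finset (Finset V)) (v : V) : Finset (Finset V) :=
  Δ.filter fun σ => v ∉ σ ∧ insert v σ ∈ Δ

/-- The closed star of a vertex `v`. -/
def closedStar (Δ : Finset (Finset V)) (v : V) : Finset (Finset V) :=
  Δ.filter fun σ => insert v σ ∈ Δ

/-- The deletion of a vertex `v`. -/
def deletion (Δ : Finset (Finset V)) (v : V) : Finset (Finset V) :=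
  Δ.filter fun σ => v ∉ σ

/-- Number of simplices of cardinality `p` (i.e. of dimension `p - 1`). -/
def fm (Δ : Finset (Finset V)) (p : ℕ) : ℕ :=
  (Δ.filter fun σ => σ.card = p).card

/-- Number of simplices of dimension `p` (i.e. of cardinality `p + 1`). -/
def fdim (Δ : Finset (Finset V)) (p : ℕ) : ℕ := fm Δ (p + 1)

/-- Euler characteristic `χ(Δ) = Σ_{p ≥ 0} (-1)^p f^p(Δ)` (empty simplex excluded). -/
def chi (Δ : Finset (Finset V)) : ℤ :=
  ∑ σ ∈ Δ.filter (fun σ => σ ≠ ∅), (-1 : ℤ) ^ (σ.card - 1)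

/-- The vertex set of a complex. -/
def verts (Δ : Finset (Finset V)) : Finset V := Δ.biUnion id

/-- `Δ` is pure of dimension `n`: every simplex is a face of some `n`-simplex. -/
def IsPure (Δ : Finset (Finset V)) (n : ℕ) : Prop :=
  ∀ σ ∈ Δ, ∃ ρ ∈ Δ, σ ⊆ ρ ∧ ρ.card = n + 1

/-- `Δ` is non-branching in dimension `n`: every `(n-1)`-simplex (cardinality `n`)
is a face of exactly two `n`-simplices (cardinality `n+1`). -/
def NonBranching (Δ : Finset (Finset V)) (n : ℕ) : Prop :=
  ∀ σ ∈ Δ, σ.card = n → (Δ.filter fun ρ => ρ.card = n + 1 ∧ σ ⊆ ρ).card = 2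

/-- Two `n`-simplices are adjacent if they share an `(n-1)`-face. -/
def adjFacet (Δ : Finset (Finset V)) (n : ℕ) (σ ρ : Finset V) : Prop :=
  σ ∈ Δ ∧ ρ ∈ Δ ∧ σ.card = n + 1 ∧ ρ.card = n + 1 ∧ (σ ∩ ρ).card = n

/-- Strong connectivity: any two `n`-simplices are joined by a chain of `n`-simplices,
consecutive ones sharing an `(n-1)`-face. -/
def StronglyConnected (Δ : Finset (Finset V)) (n : ℕ) : Prop :=
  ∀ σ ∈ Δ, σ.card = n + 1 → ∀ ρ ∈ Δ, ρ.card = n + 1 →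
    Relation.ReflTransGen (adjFacet Δ n) σ ρ

/-- An `n`-dimensional simplicial pseudo manifold. -/
def PseudoManifold (Δ : Finset (Finset V)) (n : ℕ) : Prop :=
  IsComplex Δ ∧ IsPure Δ n ∧ NonBranching Δ n ∧ StronglyConnected Δ n

/-- Normality for a 3-dimensional pseudo manifold: all vertex links are
2-dimensional pseudo manifolds. -/
def Normal3 (Δ : Finset (Finset V)) : Prop :=
  ∀ v ∈ verts Δ, PseudoManifold (lk Δ v) 2


lemma aux_exists_boundary {α : Type*} {r : α → α → Prop} {S : Set α} {x y : α}
    (h : Relation.ReflTransGen r x y) (hx : x ∈ S) : y ∉ S → ∃ u ∈ S, ∃ v, v ∉ S ∧ r u v := by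
  induction h with
  | refl => exact fun hy => absurd hx hy
  | @tail b c hb hbc ih =>
    intro hy
    by_cases hbS : b ∈ S
    · exact ⟨b, hbS, c, hy, hbc⟩
    · exact ih hbS

/-- A connected graph on vertex set `W` with edge set `A` has `|W| ≤ |A| + 1`. -/
lemma aux_count (W : Finset V) (A : Finset (Finset V)) (hAW : ∀ a ∈ A, a ⊆ W)
    (r : V)
    (hconn : ∀ x ∈ W, Relation.ReflTransGen
      (fun u v => u ≠ v ∧ ({u, v} : Finset V) ∈ A) r x) :
    ∀ (n : ℕ) (R : Finset V) (B : Finset (Finset V)), R ⊆ W → r ∈ R → B ⊆ A →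
      (∀ b ∈ B, b ⊆ R) → R.card = B.card + 1 → (W \ R).card = n → W.card ≤ A.card + 1 := by
  intro n
  induction n with
  | zero =>
    intro R B hRW hrR hBA _ hcard hn
    have hWR : W ⊆ R := by
      intro x hx
      by_contra hxR
      have : x ∈ W \ R := mem_sdiff.2 ⟨hx, hxR⟩
      rw [card_eq_zero.1 hn] at this
      exact absurd this (notMem_empty x)
    have : W = R := Subset.antisymm hWR hRW
    rw [this, hcard]
    exact Nat.add_le_add_right (card_le_card hBA) 1
  | succ n ih =>
    intro R B hRW hrR hBA hBR hcard hn
    have hne : (W \ R).Nonempty := by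
      rw [← card_pos, hn]; omega
    obtain ⟨w, hw⟩ := hne
    rw [mem_sdiff] at hw
    obtain ⟨u, huR, v, hvR, huv, hA⟩ :=
      aux_exists_boundary (S := {z : V | z ∈ R}) (hconn w hw.1) hrR hw.2
    have hvW : v ∈ W := hAW _ hA (by simp)
    have hnotB : ({u, v} : Finset V) ∉ B := by
      intro hB
      exact hvR (hBR _ hB (by simp))
    have hsd : W \ insert v R = (W \ R).erase v := by
      ext z; simp only [mem_sdiff, mem_erase, mem_insert]; tauto
    refine ih (insert v R) (insert ({u, v} : Finset V) B) ?_ ?_ ?_ ?_ ?_ ?_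
    · exact insert_subset hvW hRW
    · exact mem_insert_of_mem hrR
    · exact insert_subset hA hBA
    · intro b hb
      rcases mem_insert.1 hb with h | h
      · subst h
        exact insert_subset (mem_insert_of_mem huR) (singleton_subset_iff.2 (mem_insert_self _ _))
      · exact (hBR b h).trans (subset_insert _ _)
    · rw [card_insert_of_notMem hvR, card_insert_of_notMem hnotB, hcard]
    · rw [hsd, card_erase_of_mem (mem_sdiff.2 ⟨hvW, hvR⟩), hn]
      omega

/-- The auxiliary relation: `x` and `y` are joined by an edge of a triangle of `S`
which is not in the removed set `D`. -/
def rel2 (S D : Finset (Finset V)) (x y : V) : Prop :=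
  x ≠ y ∧ ({x, y} : Finset V) ∉ D ∧ ∃ σ ∈ S, ({x, y} : Finset V) ⊆ σ

lemma rel2_symm {S D : Finset (Finset V)} : Symmetric (rel2 S D) := by
  rintro u v ⟨h1, h2, σ, hσ, hs⟩
  exact ⟨h1.symm, by rwa [pair_comm], σ, hσ, by rwa [pair_comm]⟩

/-- Invariant: `S` is a set of triangles, `D` a set of `|S| - 1` removed edges (the
edges of a spanning tree of the dual graph on `S`), both triangles of any removed
edge belong to `S`, and the vertices of `S` are connected by non-removed edges. -/
structure Good (L S D : Finset (Finset V)) : Prop where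
  sub : ∀ σ ∈ S, σ ∈ L ∧ σ.card = 3
  cardD : D.card + 1 = S.card
  Dsub : ∀ d ∈ D, d.card = 2 ∧ d ∈ L
  Dtri : ∀ d ∈ D, ∀ τ ∈ L, τ.card = 3 → d ⊆ τ → τ ∈ S
  conn : ∀ x ∈ S.biUnion id, ∀ y ∈ S.biUnion id, Relation.ReflTransGen (rel2 S D) x y

lemma good_base (L : Finset (Finset V)) {σ : Finset V} (hσ : σ ∈ L) (hc : σ.card = 3) :
    Good L {σ} ∅ where
  sub := by simpa using ⟨hσ, hc⟩
  cardD := by simp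
  Dsub := by simp
  Dtri := by simp
  conn := by
    intro x hx y hy
    simp only [singleton_biUnion, id] at hx hy
    by_cases hxy : x = y
    · subst hxy; exact Relation.ReflTransGen.refl
    · exact Relation.ReflTransGen.single
        ⟨hxy, notMem_empty _, σ, mem_singleton_self σ, insert_subset hx (by simpa using hy)⟩

lemma good_extend {L S D : Finset (Finset V)} {σj σnew : Finset V}
    (hL : IsComplex L) (hnb : NonBranching L 2)
    (hG : Good L S D) (hjS : σj ∈ S) (hnewS : σnew ∉ S)
    (hadj : adjFacet L 2 σj σnew) :
    Good L (insert σnew S) (insert (σj ∩ σnew) D) := by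
  obtain ⟨hjL, hnewL, hjc, hnewc, hec⟩ := hadj
  set e : Finset V := σj ∩ σnew with he_def
  have heL : e ∈ L := hL σj hjL e inter_subset_left
  have hesub : e ⊆ σnew := inter_subset_right
  have hesubj : e ⊆ σj := inter_subset_left
  -- the two triangles containing e are exactly σj and σnew
  have hjne : σj ≠ σnew := fun h => hnewS (h ▸ hjS)
  have htwo : (L.filter fun ρ => ρ.card = 3 ∧ e ⊆ ρ) = {σj, σnew} := by
    refine (eq_of_subset_of_card_le ?_ ?_).symm
    · intro τ hτ
      rcases mem_insert.1 hτ with h | h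
      · subst h; exact mem_filter.2 ⟨hjL, hjc, hesubj⟩
      · rw [mem_singleton.1 h]; exact mem_filter.2 ⟨hnewL, hnewc, hesub⟩
    · rw [hnb e heL hec, card_pair hjne]
  have hDtri_e : ∀ τ ∈ L, τ.card = 3 → e ⊆ τ → τ ∈ insert σnew S := by
    intro τ hτ hc hsub
    have : τ ∈ ({σj, σnew} : Finset (Finset V)) := by
      rw [← htwo]; exact mem_filter.2 ⟨hτ, hc, hsub⟩
    rcases mem_insert.1 this with h | h
    · exact mem_insert_of_mem (h ▸ hjS)
    · exact mem_insert.2 (Or.inl (mem_singleton.1 h))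
  have heD : e ∉ D := fun h => hnewS (hG.Dtri e h σnew hnewL hnewc hesub)
  -- obtain the vertices a b c of σnew
  obtain ⟨a, b, hab, habe⟩ := card_eq_two.1 hec
  have hsd1 : (σnew \ e).card = 1 := by
    rw [card_sdiff_of_subset hesub, hnewc, hec]
  obtain ⟨c, hc⟩ := card_eq_one.1 hsd1
  have hcnew : c ∈ σnew := (mem_sdiff.1 (hc ▸ mem_singleton_self c)).1
  have hce : c ∉ e := (mem_sdiff.1 (hc ▸ mem_singleton_self c)).2
  have hae : a ∈ e := habe ▸ mem_insert_self a _
  have hbe : b ∈ e := habe ▸ mem_insert_of_mem (mem_singleton_self b)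
  have hanew : a ∈ σnew := hesub hae
  have hbnew : b ∈ σnew := hesub hbe
  have hca : c ≠ a := fun h => hce (h ▸ hae)
  have hcb : c ≠ b := fun h => hce (h ▸ hbe)
  -- edges inside σnew other than e are not removed
  have key : ∀ g : Finset V, g ⊆ σnew → g ≠ e → g ∉ insert e D := by
    intro g hg hne hgD
    rcases mem_insert.1 hgD with h | h
    · exact hne h
    · exact hnewS (hG.Dtri g h σnew hnewL hnewc hg)
  have step_ac : rel2 (insert σnew S) (insert e D) a c :=
    ⟨hca.symm, key _ (insert_subset hanew (singleton_subset_iff.2 hcnew))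
        (fun h => hce (h ▸ mem_insert_of_mem (mem_singleton_self c))),
      σnew, mem_insert_self _ _, insert_subset hanew (singleton_subset_iff.2 hcnew)⟩
  have step_bc : rel2 (insert σnew S) (insert e D) b c :=
    ⟨hcb.symm, key _ (insert_subset hbnew (singleton_subset_iff.2 hcnew))
        (fun h => hce (h ▸ mem_insert_of_mem (mem_singleton_self c))),
      σnew, mem_insert_self _ _, insert_subset hbnew (singleton_subset_iff.2 hcnew)⟩
  -- lifting old steps
  have lift : ∀ x y, rel2 S D x y →
      Relation.ReflTransGen (rel2 (insert σnew S) (insert e D)) x y := by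
    rintro x y ⟨hxy, hD, σ, hσ, hsub⟩
    by_cases h : ({x, y} : Finset V) = e
    · -- reroute through c
      have hxe : x ∈ e := h ▸ mem_insert_self x _
      have hye : y ∈ e := h ▸ mem_insert_of_mem (mem_singleton_self y)
      have hxc : rel2 (insert σnew S) (insert e D) x c :=
        ⟨fun hh => hce (hh ▸ hxe),
          key _ (insert_subset (hesub hxe) (singleton_subset_iff.2 hcnew))
            (fun hh => hce (hh ▸ mem_insert_of_mem (mem_singleton_self c))),
          σnew, mem_insert_self _ _,
          insert_subset (hesub hxe) (singleton_subset_iff.2 hcnew)⟩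
      have hcy : rel2 (insert σnew S) (insert e D) c y :=
        rel2_symm ⟨fun hh => hce (hh ▸ hye),
          key _ (insert_subset (hesub hye) (singleton_subset_iff.2 hcnew))
            (fun hh => hce (hh ▸ mem_insert_of_mem (mem_singleton_self c))),
          σnew, mem_insert_self _ _,
          insert_subset (hesub hye) (singleton_subset_iff.2 hcnew)⟩
      exact Relation.ReflTransGen.head hxc (Relation.ReflTransGen.single hcy)
    · exact Relation.ReflTransGen.single
        ⟨hxy, by simp only [mem_insert]; tauto, σ, mem_insert_of_mem hσ, hsub⟩
  have liftRT : ∀ {x y : V}, Relation.ReflTransGen (rel2 S D) x y →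
      Relation.ReflTransGen (rel2 (insert σnew S) (insert e D)) x y := by
    intro x y h
    induction h with
    | refl => exact Relation.ReflTransGen.refl
    | tail _ hbc ih => exact ih.trans (lift _ _ hbc)
  have connlift : ∀ x ∈ S.biUnion id, ∀ y ∈ S.biUnion id,
      Relation.ReflTransGen (rel2 (insert σnew S) (insert e D)) x y :=
    fun x hx y hy => liftRT (hG.conn x hx y hy)
  have ha_old : a ∈ S.biUnion id := mem_biUnion.2 ⟨σj, hjS, hesubj hae⟩
  have reach_a : ∀ z ∈ σnew,
      Relation.ReflTransGen (rel2 (insert σnew S) (insert e D)) z a := by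
    intro z hz
    have hz' : z ∈ e ∨ z = c := by
      by_cases h : z ∈ e
      · exact Or.inl h
      · exact Or.inr (mem_singleton.1 (hc ▸ mem_sdiff.2 ⟨hz, h⟩))
    rcases hz' with h | h
    · rw [habe] at h
      rcases mem_insert.1 h with h | h
      · subst h; exact Relation.ReflTransGen.refl
      · rw [mem_singleton.1 h]
        exact Relation.ReflTransGen.head step_bc (Relation.ReflTransGen.single (rel2_symm step_ac))
    · subst h; exact Relation.ReflTransGen.single (rel2_symm step_ac)
  refine ⟨?_, ?_, ?_, ?_, ?_⟩
  · intro σ hσ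
    rcases mem_insert.1 hσ with h | h
    · exact h ▸ ⟨hnewL, hnewc⟩
    · exact hG.sub σ h
  · rw [card_insert_of_notMem heD, card_insert_of_notMem hnewS, ← hG.cardD]
  · intro d hd
    rcases mem_insert.1 hd with h | h
    · exact h ▸ ⟨hec, heL⟩
    · exact hG.Dsub d h
  · intro d hd τ hτ hcτ hsubτ
    rcases mem_insert.1 hd with h | h
    · subst h; exact hDtri_e τ hτ hcτ hsubτ
    · exact mem_insert_of_mem (hG.Dtri d h τ hτ hcτ hsubτ)
  · intro x hx y hy
    rw [biUnion_insert] at hx hy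
    have hx' : x ∈ σnew ∨ x ∈ S.biUnion id := by simpa using mem_union.1 hx
    have hy' : y ∈ σnew ∨ y ∈ S.biUnion id := by simpa using mem_union.1 hy
    have hxa : Relation.ReflTransGen (rel2 (insert σnew S) (insert e D)) x a := by
      rcases hx' with h | h
      · exact reach_a x h
      · exact connlift x h a ha_old
    have hay : Relation.ReflTransGen (rel2 (insert σnew S) (insert e D)) a y := by
      rcases hy' with h | h
      · exact (by haveI : Std.Symm (rel2 (insert σnew S) (insert e D)) := ⟨fun a b hh => rel2_symm hh⟩; exact Relation.ReflTransGen.symmetric.symm _ _ (reach_a y h))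
      · exact connlift a ha_old y h
    exact hxa.trans hay


lemma good_grow {L : Finset (Finset V)} (hL : IsComplex L) (hnb : NonBranching L 2)
    (hsc : StronglyConnected L 2) :
    ∀ (n : ℕ) (S D : Finset (Finset V)), Good L S D → S.Nonempty →
      ((L.filter fun σ => σ.card = 3) \ S).card = n →
      ∃ D', Good L (L.filter fun σ => σ.card = 3) D' := by
  intro n
  induction n with
  | zero =>
    intro S D hG _ hn
    have h1 : (L.filter fun σ => σ.card = 3) ⊆ S := by
      intro τ hτ
      by_contra h
      have : τ ∈ (L.filter fun σ => σ.card = 3) \ S := mem_sdiff.2 ⟨hτ, h⟩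
      rw [card_eq_zero.1 hn] at this
      exact absurd this (notMem_empty τ)
    have h2 : S ⊆ L.filter fun σ => σ.card = 3 := fun σ hσ =>
      mem_filter.2 ⟨(hG.sub σ hσ).1, (hG.sub σ hσ).2⟩
    have hSF : S = L.filter fun σ => σ.card = 3 := Subset.antisymm h2 h1
    exact ⟨D, hSF ▸ hG⟩
  | succ n ih =>
    intro S D hG hne hn
    obtain ⟨τ, hτ⟩ : ((L.filter fun σ => σ.card = 3) \ S).Nonempty := by
      rw [← card_pos, hn]; omega
    rw [mem_sdiff, mem_filter] at hτ
    obtain ⟨σ0, hσ0⟩ := hne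
    have hσ0' := hG.sub σ0 hσ0
    have chain := hsc σ0 hσ0'.1 hσ0'.2 τ hτ.1.1 hτ.1.2
    obtain ⟨σj, hjS, σnew, hnewS, hadj⟩ :=
      aux_exists_boundary (S := {ρ : Finset V | ρ ∈ S}) chain hσ0 hτ.2
    have hGnew := good_extend hL hnb hG hjS hnewS hadj
    have hnewF : σnew ∈ L.filter fun σ => σ.card = 3 :=
      mem_filter.2 ⟨hadj.2.1, hadj.2.2.2.1⟩
    have hsd : (L.filter fun σ => σ.card = 3) \ insert σnew S
        = ((L.filter fun σ => σ.card = 3) \ S).erase σnew := by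
      ext z; simp only [mem_sdiff, mem_erase, mem_insert]; tauto
    have hcount : ((L.filter fun σ => σ.card = 3) \ insert σnew S).card = n := by
      rw [hsd, card_erase_of_mem (mem_sdiff.2 ⟨hnewF, hnewS⟩), hn]
      omega
    exact ih _ _ hGnew ⟨σnew, mem_insert_self _ _⟩ hcount

/-- For a finite, connected, strongly connected, pure 2-dimensional,
non-branching simplicial complex `L`, `f^1(L) ≥ (f^2(L) − 1) + (f^0(L) − 1)`,
hence `χ(L) ≤ 2`. -/
theorem stmt10 (L : Finset (Finset V)) (hL : IsComplex L)
    (hpure : IsPure L 2) (hnb : NonBranching L 2) (hsc : StronglyConnected L 2)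
    (hconn : ∀ x ∈ verts L, ∀ y ∈ verts L,
      Relation.ReflTransGen (fun a b => a ≠ b ∧ ({a, b} : Finset V) ∈ L) x y) :
    ((fdim L 2 : ℤ) - 1) + ((fdim L 0 : ℤ) - 1) ≤ (fdim L 1 : ℤ) ∧
      chi L ≤ 2 := by
  classical
  have hcard3 : ∀ σ ∈ L, σ.card ≤ 3 := by
    intro σ hσ
    obtain ⟨ρ, _, hsub, hc⟩ := hpure σ hσ
    have := card_le_card hsub
    omega
  have hchi : chi L = (fm L 1 : ℤ) - fm L 2 + fm L 3 := by
    have hsplit : L.filter (fun σ => σ ≠ ∅)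
        = (L.filter fun σ => σ.card = 1) ∪
          ((L.filter fun σ => σ.card = 2) ∪ (L.filter fun σ => σ.card = 3)) := by
      ext σ
      simp only [mem_filter, mem_union]
      constructor
      · rintro ⟨hσ, hne⟩
        have h1 : 1 ≤ σ.card := card_pos.2 (nonempty_iff_ne_empty.2 hne)
        have h3 := hcard3 σ hσ
        have : σ.card = 1 ∨ σ.card = 2 ∨ σ.card = 3 := by omega
        tauto
      · rintro (⟨h, hc⟩ | ⟨h, hc⟩ | ⟨h, hc⟩) <;>
          exact ⟨h, fun he => by rw [he] at hc; simp at hc⟩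
    have hd1 : Disjoint (L.filter fun σ => σ.card = 1)
        ((L.filter fun σ => σ.card = 2) ∪ (L.filter fun σ => σ.card = 3)) := by
      simp only [disjoint_left, mem_union, mem_filter]
      rintro σ ⟨_, h1⟩ (⟨_, h2⟩ | ⟨_, h2⟩) <;> omega
    have hd2 : Disjoint (L.filter fun σ => σ.card = 2) (L.filter fun σ => σ.card = 3) := by
      simp only [disjoint_left, mem_filter]
      rintro σ ⟨_, h1⟩ ⟨_, h2⟩
      omega
    have key : ∀ (i : ℕ), ∑ σ ∈ L.filter (fun σ => σ.card = i), (-1:ℤ)^(σ.card - 1)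
        = (fm L i : ℤ) * (-1)^(i-1) := by
      intro i
      rw [fm, sum_congr rfl (fun σ hσ => by rw [(mem_filter.1 hσ).2]), sum_const, nsmul_eq_mul]
    rw [chi, hsplit, sum_union hd1, sum_union hd2, key 1, key 2, key 3]
    norm_num
    ring
  by_cases hFne : (L.filter fun σ => σ.card = 3).Nonempty
  · obtain ⟨σ0, hσ0F⟩ := hFne
    have hσ0 := mem_filter.1 hσ0F
    obtain ⟨D, hGF⟩ := good_grow hL hnb hsc ((L.filter fun σ => σ.card = 3) \ {σ0}).card
      {σ0} ∅ (good_base L hσ0.1 hσ0.2) ⟨σ0, mem_singleton_self σ0⟩ rfl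
    have hDE : D ⊆ L.filter fun σ => σ.card = 2 := fun d hd =>
      mem_filter.2 ⟨(hGF.Dsub d hd).2, (hGF.Dsub d hd).1⟩
    have hWF : verts L = (L.filter fun σ => σ.card = 3).biUnion id := by
      ext v
      simp only [verts, mem_biUnion, id]
      constructor
      · rintro ⟨σ, hσ, hv⟩
        obtain ⟨ρ, hρ, hsub, hc⟩ := hpure σ hσ
        exact ⟨ρ, mem_filter.2 ⟨hρ, hc⟩, hsub hv⟩
      · rintro ⟨σ, hσ, hv⟩
        exact ⟨σ, (mem_filter.1 hσ).1, hv⟩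
    have hW0 : (verts L).card = fm L 1 := by
      rw [fm]
      apply card_bij (fun v _ => ({v} : Finset V))
      · intro v hv
        simp only [verts, mem_biUnion, id] at hv
        obtain ⟨σ, hσ, hvσ⟩ := hv
        exact mem_filter.2 ⟨hL σ hσ _ (singleton_subset_iff.2 hvσ), card_singleton v⟩
      · intro a _ b _ h
        exact singleton_inj.1 h
      · intro σ hσ
        rw [mem_filter] at hσ
        obtain ⟨v, hv⟩ := card_eq_one.1 hσ.2
        refine ⟨v, ?_, hv.symm⟩
        simp only [verts, mem_biUnion, id]
        exact ⟨σ, hσ.1, hv ▸ mem_singleton_self v⟩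
    -- connectivity of the non-removed edge graph on all vertices
    have hmono : ∀ x y, rel2 (L.filter fun σ => σ.card = 3) D x y →
        x ≠ y ∧ ({x, y} : Finset V) ∈ (L.filter fun σ => σ.card = 2) \ D := by
      rintro x y ⟨hxy, hD, σ, hσ, hsub⟩
      exact ⟨hxy, mem_sdiff.2 ⟨mem_filter.2
        ⟨hL σ (mem_filter.1 hσ).1 _ hsub, card_pair hxy⟩, hD⟩⟩
    obtain ⟨v0, hv0σ⟩ : σ0.Nonempty := card_pos.1 (by rw [hσ0.2]; norm_num)
    have hv0W : v0 ∈ verts L := by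
      simp only [verts, mem_biUnion, id]
      exact ⟨σ0, hσ0.1, hv0σ⟩
    have hconnW : ∀ x ∈ verts L, Relation.ReflTransGen
        (fun u v => u ≠ v ∧ ({u, v} : Finset V) ∈ (L.filter fun σ => σ.card = 2) \ D)
        v0 x := by
      intro x hx
      exact Relation.ReflTransGen.mono hmono _ _
        (hGF.conn v0 (hWF ▸ hv0W) x (hWF ▸ hx))
    have hAW : ∀ a ∈ (L.filter fun σ => σ.card = 2) \ D, a ⊆ verts L := by
      intro a ha v hv
      simp only [verts, mem_biUnion, id]
      exact ⟨a, (mem_filter.1 (mem_sdiff.1 ha).1).1, hv⟩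
    have hcount : (verts L).card ≤ ((L.filter fun σ => σ.card = 2) \ D).card + 1 :=
      aux_count (verts L) _ hAW v0 hconnW ((verts L) \ {v0}).card {v0} ∅
        (singleton_subset_iff.2 hv0W) (mem_singleton_self v0) (empty_subset _)
        (by simp) (by simp) rfl
    have h1 : ((L.filter fun σ => σ.card = 2) \ D).card + D.card
        = (L.filter fun σ => σ.card = 2).card := card_sdiff_add_card_eq_card hDE
    have h2 : D.card + 1 = (L.filter fun σ => σ.card = 3).card := hGF.cardD
    have e2 : fdim L 2 = (L.filter fun σ => σ.card = 3).card := rfl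
    have e1 : fdim L 1 = (L.filter fun σ => σ.card = 2).card := rfl
    have e0 : fdim L 0 = (verts L).card := hW0.symm
    constructor
    · rw [e2, e1, e0]
      omega
    · rw [hchi]
      have hfm3 : fm L 3 = (L.filter fun σ => σ.card = 3).card := rfl
      have hfm2 : fm L 2 = (L.filter fun σ => σ.card = 2).card := rfl
      have hfm1 : fm L 1 = (verts L).card := hW0.symm
      rw [hfm3, hfm2, hfm1]
      omega
  · have hLempty : L = ∅ := by
      apply eq_empty_of_forall_notMem
      intro σ hσ
      obtain ⟨ρ, hρ, _, hc⟩ := hpure σ hσ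
      exact hFne ⟨ρ, mem_filter.2 ⟨hρ, hc⟩⟩
    subst hLempty
    refine ⟨?_, ?_⟩
    · simp [fdim, fm]
    · simp [chi]
end

section
/- Let Δ be a 3-dimensional normal simplicial pseudo manifold. Then its Euler characteristic is nonnegative: χ(Δ) ≥ 0. -/
open Finset

variable {V : Type*} [DecidableEq V]

-- helper lemmas
theorem dblcount {α : Type*} [DecidableEq α] (A B : Finset α) (r : α → α → Prop)
    [∀ a b, Decidable (r a b)] :
    ∑ a ∈ A, (B.filter (fun b => r a b)).card = ∑ b ∈ B, (A.filter (fun a => r a b)).card := by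
  simp only [Finset.card_filter]
  exact Finset.sum_comm

theorem zmod2_add_self (a : ZMod 2) : a + a = 0 := by revert a; decide

theorem zmod2_cancel (a b c : ZMod 2) : (a + c) + (c + b) = a + b := by
  have := zmod2_add_self c; linear_combination this

theorem zmod2_eq_of_add_eq_zero {a b : ZMod 2} (h : a + b = 0) : a = b := by
  revert h; revert a b; decide

/-- chi as alternating sum of face numbers -/
theorem chi_eq (S : Finset (Finset V)) (N : ℕ) (hN : ∀ σ ∈ S, σ.card ≤ N) :
    chi S = ∑ p ∈ Finset.Icc 1 N, (-1 : ℤ) ^ (p - 1) * (fm S p : ℕ) := by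
  rw [chi, ← Finset.sum_fiberwise_of_maps_to (g := Finset.card) (t := Finset.Icc 1 N)
    (fun σ hσ => by
      simp only [Finset.mem_filter] at hσ
      exact Finset.mem_Icc.2 ⟨Finset.card_pos.2 (Finset.nonempty_iff_ne_empty.2 hσ.2),
        hN σ hσ.1⟩)]
  refine Finset.sum_congr rfl fun p hp => ?_
  have hp1 : 1 ≤ p := (Finset.mem_Icc.1 hp).1
  have hfil : (S.filter fun σ => σ ≠ ∅).filter (fun σ => σ.card = p)
      = S.filter (fun σ => σ.card = p) := by
    ext σ
    simp only [Finset.mem_filter, and_assoc]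
    constructor
    · rintro ⟨h1, _, h3⟩; exact ⟨h1, h3⟩
    · rintro ⟨h1, h3⟩
      refine ⟨h1, ?_, h3⟩
      intro he; rw [he] at h3; simp at h3; omega
  rw [hfil]
  have hc : ∑ σ ∈ S.filter (fun σ => σ.card = p), ((-1:ℤ))^(σ.card-1)
      = ∑ _σ ∈ S.filter (fun σ => σ.card = p), ((-1:ℤ))^(p-1) :=
    Finset.sum_congr rfl (fun σ hσ => by rw [(Finset.mem_filter.1 hσ).2])
  rw [hc, Finset.sum_const, fm]
  push_cast
  ring

/-- The `p`-th boundary map over `ZMod 2`. -/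
def bdry (S : Finset (Finset V)) (p : ℕ) :
    (↥(S.filter fun σ => σ.card = p + 1) → ZMod 2) →ₗ[ZMod 2]
    (↥(S.filter fun σ => σ.card = p) → ZMod 2) where
  toFun z := fun τ => ∑ σ : ↥(S.filter fun σ => σ.card = p + 1),
    (if (τ : Finset V) ⊆ (σ : Finset V) then (1 : ZMod 2) else 0) * z σ
  map_add' z w := by
    funext τ
    simp [mul_add, Finset.sum_add_distrib]
  map_smul' c z := by
    funext τ
    simp [Finset.mul_sum, mul_left_comm]

theorem bdry_apply (S : Finset (Finset V)) (p : ℕ)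
    (z : ↥(S.filter fun σ => σ.card = p + 1) → ZMod 2)
    (τ : ↥(S.filter fun σ => σ.card = p)) :
    bdry S p z τ = ∑ σ : ↥(S.filter fun σ => σ.card = p + 1),
      (if (τ : Finset V) ⊆ (σ : Finset V) then (1 : ZMod 2) else 0) * z σ := rfl

/-- single basis function -/
def sgl {α : Type*} [DecidableEq α] (i : α) : α → ZMod 2 := fun j => if j = i then 1 else 0

theorem bdry_sgl (S : Finset (Finset V)) (p : ℕ)
    (e : ↥(S.filter fun σ => σ.card = p + 1)) (τ : ↥(S.filter fun σ => σ.card = p)) :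
    bdry S p (sgl e) τ = if (τ : Finset V) ⊆ (e : Finset V) then 1 else 0 := by
  rw [bdry_apply]
  rw [Finset.sum_eq_single e]
  · simp [sgl]
  · intro b _ hb
    simp [sgl, hb]
  · simp

set_option maxHeartbeats 2000000 in
theorem chi_le_two (S : Finset (Finset V)) (hS : PseudoManifold S 2) (hem : ∅ ∈ S) :
    chi S ≤ 2 := by
  obtain ⟨hcx, hpure, hnb, hsc⟩ := hS
  obtain ⟨σ0, hσ0S, -, hσ0c⟩ := hpure ∅ hem
  -- notation
  set d1 := bdry S 1 with hd1
  set d2 := bdry S 2 with hd2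
  have hcard3 : ∀ σ ∈ S, σ.card ≤ 3 := by
    intro σ hσ
    obtain ⟨ρ, -, hsub, hc⟩ := hpure σ hσ
    calc σ.card ≤ ρ.card := Finset.card_le_card hsub
    _ = 3 := hc
  -- chi in terms of face numbers
  have hchi : chi S = ((S.filter fun σ => σ.card = 1).card : ℤ)
      - (S.filter fun σ => σ.card = 2).card + (S.filter fun σ => σ.card = 3).card := by
    rw [chi_eq S 3 hcard3]
    rw [show Finset.Icc 1 3 = {1, 2, 3} from rfl]
    rw [Finset.sum_insert (by decide), Finset.sum_insert (by decide), Finset.sum_singleton]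
    simp [fm]
    ring
  -- vertex indicator functions
  set f : V → (↥(S.filter fun σ => σ.card = 1) → ZMod 2) :=
    fun u τ => if (τ : Finset V) = {u} then 1 else 0 with hf
  -- vertices of a common facet are connected
  have key1 : ∀ t ∈ S, t.card = 3 → ∀ u ∈ t, ∀ w ∈ t,
      f u + f w ∈ LinearMap.range d1 := by
    intro t htS htc u hu w hw
    rcases eq_or_ne u w with rfl | huw
    · have : f u + f u = 0 := by
        funext τ; exact zmod2_add_self _
      rw [this]
      exact Submodule.zero_mem _
    · have heS : ({u, w} : Finset V) ∈ S :=
        hcx t htS _ (Finset.insert_subset hu (Finset.singleton_subset_iff.2 hw))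
      have hec : ({u, w} : Finset V).card = 2 := Finset.card_pair huw
      have heM : ({u, w} : Finset V) ∈ S.filter fun σ => σ.card = 2 :=
        Finset.mem_filter.2 ⟨heS, hec⟩
      refine ⟨sgl ⟨{u, w}, heM⟩, ?_⟩
      funext τ
      rw [show (1 : ℕ) + 1 = 2 from rfl] at *
      rw [bdry_sgl]
      obtain ⟨x, hx⟩ := Finset.card_eq_one.1 (Finset.mem_filter.1 τ.2).2
      simp only [hf, Pi.add_apply, hx]
      have h1 : (({x} : Finset V) ⊆ {u, w}) ↔ (x = u ∨ x = w) := by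
        simp [Finset.singleton_subset_iff]
      have h2 : (({x} : Finset V) = {u}) ↔ x = u := Finset.singleton_inj
      have h3 : (({x} : Finset V) = {w}) ↔ x = w := Finset.singleton_inj
      rw [if_congr h1 rfl rfl, if_congr h2 rfl rfl, if_congr h3 rfl rfl]
      by_cases hxu : x = u <;> by_cases hxw : x = w
      · exact absurd (hxu.symm.trans hxw) huw
      · have := huw; simp [hxu, hxw, huw]
      · have : w ≠ u := Ne.symm huw
        simp [hxu, hxw, this]
      · simp [hxu, hxw]
  -- vertices of chained facets are connected
  have key2 : ∀ a b : Finset V, Relation.ReflTransGen (adjFacet S 2) a b →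
      a ∈ S → a.card = 3 → ∀ u ∈ a, ∀ w ∈ b, f u + f w ∈ LinearMap.range d1 := by
    intro a b h
    induction h with
    | refl => intro haS hac u hu w hw; exact key1 a haS hac u hu w hw
    | @tail b' c' h1 h2 ih =>
      intro haS hac u hu w hw
      obtain ⟨hbS, hcS, hbc, hcc, hic⟩ := h2
      obtain ⟨x, hx⟩ := Finset.card_pos.1 (by rw [hic]; norm_num : 0 < (b' ∩ c').card)
      have hxb : x ∈ b' := (Finset.mem_inter.1 hx).1
      have hxc : x ∈ c' := (Finset.mem_inter.1 hx).2
      have m1 : f u + f x ∈ LinearMap.range d1 := ih haS hac u hu x hxb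
      have m2 : f x + f w ∈ LinearMap.range d1 := key1 c' hcS (by omega) x hxc w hw
      have : (f u + f x) + (f x + f w) = f u + f w := by
        funext τ; exact zmod2_cancel _ _ _
      rw [← this]
      exact Submodule.add_mem _ m1 m2
  -- any two basis vertex vectors are connected
  have conn : ∀ τ τ' : ↥(S.filter fun σ => σ.card = 1),
      ∃ u u' : V, (τ : Finset V) = {u} ∧ (τ' : Finset V) = {u'} ∧
        f u + f u' ∈ LinearMap.range d1 := by
    intro τ τ'
    obtain ⟨u, hu⟩ := Finset.card_eq_one.1 (Finset.mem_filter.1 τ.2).2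
    obtain ⟨u', hu'⟩ := Finset.card_eq_one.1 (Finset.mem_filter.1 τ'.2).2
    refine ⟨u, u', hu, hu', ?_⟩
    have hτS : ({u} : Finset V) ∈ S := hu ▸ (Finset.mem_filter.1 τ.2).1
    have hτ'S : ({u'} : Finset V) ∈ S := hu' ▸ (Finset.mem_filter.1 τ'.2).1
    obtain ⟨ρ, hρS, hρsub, hρc⟩ := hpure _ hτS
    obtain ⟨ρ', hρ'S, hρ'sub, hρ'c⟩ := hpure _ hτ'S
    have hchain := hsc ρ hρS hρc ρ' hρ'S hρ'c
    exact key2 ρ ρ' hchain hρS (by omega) u (hρsub (Finset.mem_singleton_self u))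
      u' (hρ'sub (Finset.mem_singleton_self u'))
  -- sgl equals f
  have sgl_eq_f : ∀ (τ : ↥(S.filter fun σ => σ.card = 1)) (u : V),
      (τ : Finset V) = {u} → sgl τ = f u := by
    intro τ u hu
    funext τ'
    simp only [sgl, hf]
    by_cases h : τ' = τ
    · subst h; rw [if_pos rfl, if_pos hu]
    · rw [if_neg h, if_neg]
      intro hc
      exact h (Subtype.ext (by rw [hc, hu]))
  -- span singleton rank ≤ 1
  have span_le_one : ∀ (g : ↥(S.filter fun σ => σ.card = 1) → ZMod 2),
      Module.finrank (ZMod 2) (Submodule.span (ZMod 2) {g}) ≤ 1 := by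
    intro g
    rcases eq_or_ne g 0 with rfl | hg
    · rw [Submodule.span_zero_singleton]
      simp
    · rw [finrank_span_singleton hg]
  -- rank bound for vertices
  obtain ⟨u0, hu0⟩ := Finset.card_pos.1 (by omega : 0 < σ0.card)
  have hn1 : (S.filter fun σ => σ.card = 1).card ≤
      Module.finrank (ZMod 2) (LinearMap.range d1) + 1 := by
    set K := LinearMap.range d1 ⊔ Submodule.span (ZMod 2) {f u0} with hK
    have hmem : ∀ τ : ↥(S.filter fun σ : Finset V => σ.card = 1), sgl τ ∈ K := by
      intro τ
      obtain ⟨u, hu⟩ := Finset.card_eq_one.1 (Finset.mem_filter.1 τ.2).2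
      rw [sgl_eq_f τ u hu]
      have h1 : f u + f u0 ∈ LinearMap.range d1 := by
        have hτS : ({u} : Finset V) ∈ S := hu ▸ (Finset.mem_filter.1 τ.2).1
        obtain ⟨ρ, hρS, hρsub, hρc⟩ := hpure _ hτS
        have hchain := hsc ρ hρS hρc σ0 hσ0S hσ0c
        exact key2 ρ σ0 hchain hρS (by omega) u (hρsub (Finset.mem_singleton_self u)) u0 hu0
      have h2 : f u = (f u + f u0) + f u0 := by
        funext τ'
        have := zmod2_cancel (f u τ') 0 (f u0 τ')
        simp only [Pi.add_apply]
        rw [add_zero] at this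
        rw [this, add_zero]
      rw [h2]
      exact Submodule.add_mem _ (Submodule.mem_sup_left h1)
        (Submodule.mem_sup_right (Submodule.mem_span_singleton_self _))
    have htop : (⊤ : Submodule (ZMod 2) (↥(S.filter fun σ => σ.card = 1) → ZMod 2)) ≤ K := by
      intro z _
      rw [pi_eq_sum_univ z]
      refine Submodule.sum_mem _ fun τ _ => Submodule.smul_mem _ _ ?_
      have : (fun j => if τ = j then (1 : ZMod 2) else 0) = sgl τ := by
        funext j; simp [sgl, eq_comm]
      rw [this]
      exact hmem τ
    calc (S.filter fun σ => σ.card = 1).card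
        = Module.finrank (ZMod 2) (↥(S.filter fun σ => σ.card = 1) → ZMod 2) := by
          rw [Module.finrank_pi, Fintype.card_coe]
      _ = Module.finrank (ZMod 2) (⊤ : Submodule (ZMod 2) _) := (finrank_top _ _).symm
      _ = Module.finrank (ZMod 2) K := by rw [top_le_iff.1 htop]
      _ ≤ Module.finrank (ZMod 2) (LinearMap.range d1)
          + Module.finrank (ZMod 2) (Submodule.span (ZMod 2) {f u0}) :=
          Submodule.finrank_add_le_finrank_add_finrank _ _
      _ ≤ Module.finrank (ZMod 2) (LinearMap.range d1) + 1 := by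
          have := span_le_one (f u0); omega
  -- kernel of d2 is at most 1-dimensional
  have hσ0M : σ0 ∈ S.filter fun σ => σ.card = 2 + 1 := Finset.mem_filter.2 ⟨hσ0S, hσ0c⟩
  have hker2 : Module.finrank (ZMod 2) (LinearMap.ker d2) ≤ 1 := by
    have hle : LinearMap.ker d2 ≤ Submodule.span (ZMod 2)
        {(fun _ => 1 : ↥(S.filter fun σ => σ.card = 2 + 1) → ZMod 2)} := by
      intro z hz
      rw [LinearMap.mem_ker] at hz
      -- adjacent facets have equal values
      have hadj : ∀ σ ρ : ↥(S.filter fun σ => σ.card = 2 + 1),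
          adjFacet S 2 ↑σ ↑ρ → z σ = z ρ := by
        intro σ ρ hadj
        obtain ⟨hσS, hρS, hσc, hρc, hic⟩ := hadj
        have hne : σ ≠ ρ := by
          intro h
          rw [h, Finset.inter_self] at hic
          omega
        have hneF : (σ : Finset V) ≠ (ρ : Finset V) := fun h => hne (Subtype.ext h)
        set τ : Finset V := (σ : Finset V) ∩ (ρ : Finset V) with hτ
        have hτS : τ ∈ S := hcx _ hσS _ Finset.inter_subset_left
        have hτM : τ ∈ S.filter fun σ => σ.card = 2 := Finset.mem_filter.2 ⟨hτS, hic⟩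
        have hfil : S.filter (fun ρ' => ρ'.card = 2 + 1 ∧ τ ⊆ ρ') = {↑σ, ↑ρ} := by
          refine (Finset.eq_of_subset_of_card_le ?_ ?_).symm
          · intro x hx
            rcases Finset.mem_insert.1 hx with rfl | hx
            · exact Finset.mem_filter.2 ⟨hσS, hσc, Finset.inter_subset_left⟩
            · rw [Finset.mem_singleton] at hx
              subst hx
              exact Finset.mem_filter.2 ⟨hρS, hρc, Finset.inter_subset_right⟩
          · rw [hnb τ hτS hic, Finset.card_pair hneF]
        have hz2 := congrFun (congrArg (fun g => g) hz) ⟨τ, hτM⟩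
        have hz3 : d2 z ⟨τ, hτM⟩ = 0 := congrFun hz ⟨τ, hτM⟩
        rw [hd2, bdry_apply] at hz3
        have hsum : ∑ σ' : ↥(S.filter fun σ => σ.card = 2 + 1),
            (if ((⟨τ, hτM⟩ : ↥(S.filter fun σ => σ.card = 2)) : Finset V) ⊆ (σ' : Finset V)
              then (1 : ZMod 2) else 0) * z σ' = z σ + z ρ := by
          have huf : (Finset.univ.filter fun σ' : ↥(S.filter fun σ => σ.card = 2 + 1) =>
              τ ⊆ (σ' : Finset V)) = {σ, ρ} := by
            ext σ'
            simp only [Finset.mem_filter, Finset.mem_univ, true_and, Finset.mem_insert,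
              Finset.mem_singleton]
            constructor
            · intro hsub
              have : (σ' : Finset V) ∈ S.filter (fun ρ' => ρ'.card = 2 + 1 ∧ τ ⊆ ρ') :=
                Finset.mem_filter.2 ⟨(Finset.mem_filter.1 σ'.2).1,
                  (Finset.mem_filter.1 σ'.2).2, hsub⟩
              rw [hfil] at this
              rcases Finset.mem_insert.1 this with h | h
              · exact Or.inl (Subtype.ext h)
              · exact Or.inr (Subtype.ext (Finset.mem_singleton.1 h))
            · rintro (rfl | rfl)
              · exact Finset.inter_subset_left
              · exact Finset.inter_subset_right
          calc ∑ σ' : ↥(S.filter fun σ => σ.card = 2 + 1),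
              (if τ ⊆ (σ' : Finset V) then (1 : ZMod 2) else 0) * z σ'
              = ∑ σ' ∈ Finset.univ.filter (fun σ' : ↥(S.filter fun σ => σ.card = 2 + 1) =>
                  τ ⊆ (σ' : Finset V)), z σ' := by
                rw [Finset.sum_filter]
                refine Finset.sum_congr rfl fun σ' _ => ?_
                by_cases h : τ ⊆ (σ' : Finset V) <;> simp [h]
            _ = z σ + z ρ := by rw [huf, Finset.sum_pair hne]
        rw [hsum] at hz3
        exact zmod2_eq_of_add_eq_zero hz3
      -- all facets have equal values
      have hall : ∀ σ ρ : ↥(S.filter fun σ => σ.card = 2 + 1), z σ = z ρ := by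
        have aux : ∀ a b : Finset V, Relation.ReflTransGen (adjFacet S 2) a b →
            ∀ (ha : a ∈ S.filter fun σ => σ.card = 2 + 1)
              (hb : b ∈ S.filter fun σ => σ.card = 2 + 1), z ⟨a, ha⟩ = z ⟨b, hb⟩ := by
          intro a b h
          induction h with
          | refl => intro ha hb; rfl
          | @tail b' c' h1 h2 ih =>
            intro ha hb
            have hb'M : b' ∈ S.filter fun σ => σ.card = 2 + 1 :=
              Finset.mem_filter.2 ⟨h2.1, h2.2.2.1⟩
            exact (ih ha hb'M).trans (hadj ⟨b', hb'M⟩ ⟨c', hb⟩ h2)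
        intro σ ρ
        have h1 := Finset.mem_filter.1 σ.2
        have h2 := Finset.mem_filter.1 ρ.2
        have := aux ↑σ ↑ρ (hsc ↑σ h1.1 h1.2 ↑ρ h2.1 h2.2) σ.2 ρ.2
        simpa using this
      rw [Submodule.mem_span_singleton]
      refine ⟨z ⟨σ0, hσ0M⟩, ?_⟩
      funext σ
      have := hall σ ⟨σ0, hσ0M⟩
      simp [this]
    calc Module.finrank (ZMod 2) (LinearMap.ker d2)
        ≤ Module.finrank (ZMod 2) (Submodule.span (ZMod 2)
          {(fun _ => 1 : ↥(S.filter fun σ => σ.card = 2 + 1) → ZMod 2)}) :=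
          Submodule.finrank_mono hle
      _ ≤ 1 := by
          rcases eq_or_ne (fun _ => 1 : ↥(S.filter fun σ => σ.card = 2 + 1) → ZMod 2) 0
            with h | h
          · rw [h, Submodule.span_zero_singleton]; simp
          · rw [finrank_span_singleton h]
  -- d1 ∘ d2 = 0
  have hcomp : LinearMap.range d2 ≤ LinearMap.ker d1 := by
    rintro _ ⟨w, rfl⟩
    rw [LinearMap.mem_ker]
    funext τ
    rw [hd1, hd2, bdry_apply]
    have hinner : ∀ σ : ↥(S.filter fun σ => σ.card = 2 + 1),
        (∑ e : ↥(S.filter fun σ => σ.card = 1 + 1),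
          (if (τ : Finset V) ⊆ (e : Finset V) then (1 : ZMod 2) else 0) *
          (if (e : Finset V) ⊆ (σ : Finset V) then (1 : ZMod 2) else 0)) = 0 := by
      intro σ
      obtain ⟨x, hx⟩ := Finset.card_eq_one.1 (Finset.mem_filter.1 τ.2).2
      have hσc : (σ : Finset V).card = 2 + 1 := (Finset.mem_filter.1 σ.2).2
      have step : ∀ e : ↥(S.filter fun σ => σ.card = 1 + 1),
          (if (τ : Finset V) ⊆ (e : Finset V) then (1 : ZMod 2) else 0) *
          (if (e : Finset V) ⊆ (σ : Finset V) then (1 : ZMod 2) else 0)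
          = (if ((τ : Finset V) ⊆ (e : Finset V) ∧ (e : Finset V) ⊆ (σ : Finset V))
              then (1 : ZMod 2) else 0) := by
        intro e
        by_cases h1 : (τ : Finset V) ⊆ (e : Finset V) <;>
          by_cases h2 : (e : Finset V) ⊆ (σ : Finset V) <;> simp [h1, h2]
      rw [Finset.sum_congr rfl fun e _ => step e, Finset.sum_boole]
      by_cases hxσ : x ∈ (σ : Finset V)
      · have hcount : ((σ : Finset V).erase x).card =
            (Finset.univ.filter fun e : ↥(S.filter fun σ => σ.card = 1 + 1) =>
              (τ : Finset V) ⊆ (e : Finset V) ∧ (e : Finset V) ⊆ (σ : Finset V)).card := by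
          refine Finset.card_bij (fun y hy => ⟨{x, y}, ?_⟩) ?_ ?_ ?_
          · have hyx : y ≠ x := Finset.ne_of_mem_erase hy
            have hyσ : y ∈ (σ : Finset V) := Finset.mem_of_mem_erase hy
            refine Finset.mem_filter.2 ⟨hcx _ (Finset.mem_filter.1 σ.2).1 _
              (Finset.insert_subset hxσ (Finset.singleton_subset_iff.2 hyσ)), ?_⟩
            rw [Finset.card_pair (Ne.symm hyx)]
          · intro y hy
            have hyσ : y ∈ (σ : Finset V) := Finset.mem_of_mem_erase hy
            refine Finset.mem_filter.2 ⟨Finset.mem_univ _, ?_, ?_⟩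
            · rw [hx]
              exact Finset.singleton_subset_iff.2 (Finset.mem_insert_self x _)
            · exact Finset.insert_subset hxσ (Finset.singleton_subset_iff.2 hyσ)
          · intro y1 hy1 y2 hy2 heq
            have : ({x, y1} : Finset V) = {x, y2} := congrArg Subtype.val heq
            have hy1x : y1 ≠ x := Finset.ne_of_mem_erase hy1
            have : y1 ∈ ({x, y2} : Finset V) := this ▸ Finset.mem_insert_of_mem
              (Finset.mem_singleton_self y1)
            rcases Finset.mem_insert.1 this with h | h
            · exact absurd h hy1x
            · exact Finset.mem_singleton.1 h
          · intro e he
            obtain ⟨-, hτe, heσ⟩ := Finset.mem_filter.1 he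
            have hec : (e : Finset V).card = 1 + 1 := (Finset.mem_filter.1 e.2).2
            have hxe : x ∈ (e : Finset V) := by
              rw [hx] at hτe
              exact Finset.singleton_subset_iff.1 hτe
            have h1 : ((e : Finset V).erase x).card = 1 := by
              rw [Finset.card_erase_of_mem hxe, hec]
            obtain ⟨y, hy⟩ := Finset.card_eq_one.1 h1
            have hyex : y ∈ (e : Finset V).erase x := hy ▸ Finset.mem_singleton_self y
            have hyx : y ≠ x := Finset.ne_of_mem_erase hyex
            have hyσ : y ∈ (σ : Finset V) := heσ (Finset.mem_of_mem_erase hyex)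
            refine ⟨y, Finset.mem_erase.2 ⟨hyx, hyσ⟩, ?_⟩
            apply Subtype.ext
            show ({x, y} : Finset V) = (e : Finset V)
            rw [← Finset.insert_erase hxe, hy]
        rw [← hcount, Finset.card_erase_of_mem hxσ, hσc]
        decide
      · have hempty : (Finset.univ.filter fun e : ↥(S.filter fun σ => σ.card = 1 + 1) =>
            (τ : Finset V) ⊆ (e : Finset V) ∧ (e : Finset V) ⊆ (σ : Finset V)) = ∅ := by
          rw [Finset.filter_eq_empty_iff]
          rintro e - ⟨hτe, heσ⟩
          apply hxσ
          apply heσ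
          rw [hx] at hτe
          exact Finset.singleton_subset_iff.1 hτe
        rw [hempty]
        simp
    calc ∑ e : ↥(S.filter fun σ => σ.card = 1 + 1),
        (if (τ : Finset V) ⊆ (e : Finset V) then (1 : ZMod 2) else 0) * bdry S 2 w e
        = ∑ e : ↥(S.filter fun σ => σ.card = 1 + 1),
          ∑ σ : ↥(S.filter fun σ => σ.card = 2 + 1),
            ((if (τ : Finset V) ⊆ (e : Finset V) then (1 : ZMod 2) else 0) *
             (if (e : Finset V) ⊆ (σ : Finset V) then (1 : ZMod 2) else 0)) * w σ := by
          refine Finset.sum_congr rfl fun e _ => ?_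
          rw [bdry_apply, Finset.mul_sum]
          exact Finset.sum_congr rfl fun σ _ => (mul_assoc _ _ _).symm
      _ = ∑ σ : ↥(S.filter fun σ => σ.card = 2 + 1),
          (∑ e : ↥(S.filter fun σ => σ.card = 1 + 1),
            (if (τ : Finset V) ⊆ (e : Finset V) then (1 : ZMod 2) else 0) *
            (if (e : Finset V) ⊆ (σ : Finset V) then (1 : ZMod 2) else 0)) * w σ := by
          rw [Finset.sum_comm]
          exact Finset.sum_congr rfl fun σ _ => (Finset.sum_mul _ _ _).symm
      _ = 0 := by
          rw [Finset.sum_congr rfl fun σ _ => by rw [hinner σ, zero_mul]]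
          simp
  -- assemble
  have r1 := LinearMap.finrank_range_add_finrank_ker d1
  have r2 := LinearMap.finrank_range_add_finrank_ker d2
  rw [Module.finrank_pi, Fintype.card_coe] at r1 r2
  have hb : Module.finrank (ZMod 2) (LinearMap.range d2)
      ≤ Module.finrank (ZMod 2) (LinearMap.ker d1) := Submodule.finrank_mono hcomp
  have e2 : (S.filter fun σ => σ.card = 1 + 1).card = (S.filter fun σ => σ.card = 2).card := rfl
  have e3 : (S.filter fun σ => σ.card = 2 + 1).card = (S.filter fun σ => σ.card = 3).card := rfl
  rw [e2] at r1
  rw [e3] at r2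
  rw [hchi]
  omega

theorem chi_lk (Δ : Finset (Finset V)) (hcx : IsComplex Δ) (v : V) :
    chi (lk Δ v) = ∑ τ ∈ Δ.filter (fun τ => v ∈ τ ∧ 2 ≤ τ.card), (-1 : ℤ) ^ (τ.card - 2) := by
  rw [chi]
  refine Finset.sum_bij' (fun σ _ => insert v σ) (fun τ _ => τ.erase v) ?_ ?_ ?_ ?_ ?_
  · intro σ hσ
    obtain ⟨hσlk, hσne⟩ := Finset.mem_filter.1 hσ
    obtain ⟨hσΔ, hvσ, hins⟩ := Finset.mem_filter.1 hσlk
    refine Finset.mem_filter.2 ⟨hins, Finset.mem_insert_self _ _, ?_⟩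
    rw [Finset.card_insert_of_notMem hvσ]
    have : 0 < σ.card := Finset.card_pos.2 (Finset.nonempty_iff_ne_empty.2 hσne)
    omega
  · intro τ hτ
    obtain ⟨hτΔ, hvτ, hτc⟩ := Finset.mem_filter.1 hτ
    refine Finset.mem_filter.2 ⟨Finset.mem_filter.2
      ⟨hcx τ hτΔ _ (Finset.erase_subset v τ), Finset.notMem_erase v τ, ?_⟩, ?_⟩
    · rw [Finset.insert_erase hvτ]; exact hτΔ
    · intro h
      have h2 := Finset.card_erase_of_mem hvτ
      have h3 : τ.erase v = ∅ := h
      rw [h3] at h2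
      simp at h2
      omega
  · intro σ hσ
    obtain ⟨hσlk, -⟩ := Finset.mem_filter.1 hσ
    exact Finset.erase_insert (Finset.mem_filter.1 hσlk).2.1
  · intro τ hτ
    exact Finset.insert_erase (Finset.mem_filter.1 hτ).2.1
  · intro σ hσ
    obtain ⟨hσlk, -⟩ := Finset.mem_filter.1 hσ
    show ((-1 : ℤ)) ^ (σ.card - 1) = ((-1 : ℤ)) ^ ((insert v σ).card - 2)
    rw [Finset.card_insert_of_notMem (Finset.mem_filter.1 hσlk).2.1]
    congr 1

/-- A 3-dimensional normal simplicial pseudo manifold has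
nonnegative Euler characteristic. -/
theorem stmt11 (Δ : Finset (Finset V)) (hpm : PseudoManifold Δ 3)
    (hnormal : Normal3 Δ) : 0 ≤ chi Δ := by
  obtain ⟨hcx, hpure, hnb, hsc⟩ := hpm
  rcases Finset.eq_empty_or_nonempty Δ with rfl | ⟨σw, hσw⟩
  · simp [chi]
  have hem : ∅ ∈ Δ := hcx σw hσw ∅ (Finset.empty_subset _)
  have hcard4 : ∀ σ ∈ Δ, σ.card ≤ 4 := by
    intro σ hσ
    obtain ⟨ρ, -, hsub, hc⟩ := hpure σ hσ
    have := Finset.card_le_card hsub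
    omega
  set n1 := (Δ.filter fun σ => σ.card = 1).card with hn1
  set n2 := (Δ.filter fun σ => σ.card = 2).card with hn2
  set n3 := (Δ.filter fun σ => σ.card = 3).card with hn3
  set n4 := (Δ.filter fun σ => σ.card = 4).card with hn4
  -- chi formula
  have hchiΔ : chi Δ = (n1 : ℤ) - n2 + n3 - n4 := by
    rw [chi_eq Δ 4 hcard4]
    rw [show Finset.Icc 1 4 = {1, 2, 3, 4} from rfl]
    rw [Finset.sum_insert (by decide), Finset.sum_insert (by decide),
      Finset.sum_insert (by decide), Finset.sum_singleton]
    simp [fm, hn1, hn2, hn3, hn4]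
    ring
  -- singleton membership
  have hsingleton : ∀ v ∈ verts Δ, ({v} : Finset V) ∈ Δ := by
    intro v hv
    obtain ⟨σ, hσ, hvσ⟩ := Finset.mem_biUnion.1 hv
    exact hcx σ hσ _ (Finset.singleton_subset_iff.2 hvσ)
  -- vertex count
  have hverts : (verts Δ).card = n1 := by
    refine Finset.card_bij (fun v _ => {v}) ?_ ?_ ?_
    · intro v hv
      exact Finset.mem_filter.2 ⟨hsingleton v hv, Finset.card_singleton v⟩
    · intro v1 hv1 v2 hv2 h
      exact Finset.singleton_inj.1 h
    · intro σ hσ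
      obtain ⟨hσΔ, hσc⟩ := Finset.mem_filter.1 hσ
      obtain ⟨u, hu⟩ := Finset.card_eq_one.1 hσc
      refine ⟨u, ?_, hu.symm⟩
      refine Finset.mem_biUnion.2 ⟨σ, hσΔ, ?_⟩
      rw [hu]; exact Finset.mem_singleton_self u
  -- non-branching count: 2 * n3 = 4 * n4
  have hnbc : 2 * n3 = 4 * n4 := by
    have hd := dblcount (Δ.filter fun σ => σ.card = 3) (Δ.filter fun σ => σ.card = 4)
      (fun σ ρ => σ ⊆ ρ)
    have htermL : ∀ σ ∈ Δ.filter (fun σ => σ.card = 3),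
        ((Δ.filter fun σ => σ.card = 4).filter (fun ρ => σ ⊆ ρ)).card = 2 := by
      intro σ hσ
      rw [Finset.filter_filter]
      obtain ⟨hσΔ, hσc⟩ := Finset.mem_filter.1 hσ
      exact hnb σ hσΔ hσc
    have hL : ∑ σ ∈ Δ.filter (fun σ => σ.card = 3),
        ((Δ.filter fun σ => σ.card = 4).filter (fun ρ => σ ⊆ ρ)).card = 2 * n3 := by
      rw [Finset.sum_congr rfl htermL, Finset.sum_const, smul_eq_mul]
      ring
    have htermR : ∀ ρ ∈ Δ.filter (fun σ => σ.card = 4),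
        ((Δ.filter fun σ => σ.card = 3).filter (fun σ => σ ⊆ ρ)).card = 4 := by
      intro ρ hρ
      obtain ⟨hρΔ, hρc⟩ := Finset.mem_filter.1 hρ
      have : (Δ.filter fun σ => σ.card = 3).filter (fun σ => σ ⊆ ρ)
          = ρ.powersetCard 3 := by
        ext σ
        rw [Finset.mem_powersetCard]
        simp only [Finset.mem_filter]
        constructor
        · rintro ⟨⟨-, hc⟩, hsub⟩; exact ⟨hsub, hc⟩
        · rintro ⟨hsub, hc⟩
          exact ⟨⟨hcx ρ hρΔ σ hsub, hc⟩, hsub⟩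
      rw [this, Finset.card_powersetCard, hρc]
      decide
    have hR : ∑ ρ ∈ Δ.filter (fun σ => σ.card = 4),
        ((Δ.filter fun σ => σ.card = 3).filter (fun σ => σ ⊆ ρ)).card = 4 * n4 := by
      rw [Finset.sum_congr rfl htermR, Finset.sum_const, smul_eq_mul]
      ring
    rw [hL, hR] at hd
    exact hd
  -- sum of link Euler characteristics
  have hsum : ∑ v ∈ verts Δ, chi (lk Δ v)
      = ∑ τ ∈ Δ.filter (fun τ => 2 ≤ τ.card), (τ.card : ℤ) * (-1) ^ (τ.card - 2) := by
    have h0 : ∀ v ∈ verts Δ, chi (lk Δ v)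
        = ∑ τ ∈ Δ.filter (fun τ => v ∈ τ ∧ 2 ≤ τ.card), (-1 : ℤ) ^ (τ.card - 2) :=
      fun v _ => chi_lk Δ hcx v
    rw [Finset.sum_congr rfl h0]
    calc ∑ v ∈ verts Δ, ∑ τ ∈ Δ.filter (fun τ => v ∈ τ ∧ 2 ≤ τ.card), (-1 : ℤ) ^ (τ.card - 2)
        = ∑ v ∈ verts Δ, ∑ τ ∈ Δ,
            if v ∈ τ ∧ 2 ≤ τ.card then (-1 : ℤ) ^ (τ.card - 2) else 0 :=
          Finset.sum_congr rfl fun v _ => Finset.sum_filter _ _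
      _ = ∑ τ ∈ Δ, ∑ v ∈ verts Δ,
            if v ∈ τ ∧ 2 ≤ τ.card then (-1 : ℤ) ^ (τ.card - 2) else 0 := Finset.sum_comm
      _ = ∑ τ ∈ Δ, (if 2 ≤ τ.card then (τ.card : ℤ) * (-1) ^ (τ.card - 2) else 0) := by
          refine Finset.sum_congr rfl fun τ hτ => ?_
          have hsub : τ ⊆ verts Δ := fun v hvτ => Finset.mem_biUnion.2 ⟨τ, hτ, hvτ⟩
          by_cases hc : 2 ≤ τ.card
          · rw [if_pos hc]
            have : ∀ v ∈ verts Δ, (if v ∈ τ ∧ 2 ≤ τ.card then (-1 : ℤ) ^ (τ.card - 2) else 0)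
                = if v ∈ τ then (-1 : ℤ) ^ (τ.card - 2) else 0 := by
              intro v _
              by_cases hv : v ∈ τ <;> simp [hv, hc]
            rw [Finset.sum_congr rfl this, ← Finset.sum_filter,
              Finset.filter_mem_eq_inter, Finset.inter_eq_right.2 hsub,
              Finset.sum_const, nsmul_eq_mul]
          · have : ∀ v ∈ verts Δ, (if v ∈ τ ∧ 2 ≤ τ.card then (-1 : ℤ) ^ (τ.card - 2) else 0)
                = 0 := by intro v _; simp [hc]
            rw [Finset.sum_congr rfl this, if_neg hc, Finset.sum_const, smul_zero]
      _ = ∑ τ ∈ Δ.filter (fun τ => 2 ≤ τ.card), (τ.card : ℤ) * (-1) ^ (τ.card - 2) :=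
          (Finset.sum_filter _ _).symm
  -- fiberwise evaluation
  have hfib : ∑ τ ∈ Δ.filter (fun τ => 2 ≤ τ.card), (τ.card : ℤ) * (-1) ^ (τ.card - 2)
      = 2 * (n2 : ℤ) - 3 * n3 + 4 * n4 := by
    rw [← Finset.sum_fiberwise_of_maps_to (g := Finset.card) (t := Finset.Icc 2 4)
      (fun τ hτ => by
        obtain ⟨hτΔ, hτc⟩ := Finset.mem_filter.1 hτ
        exact Finset.mem_Icc.2 ⟨hτc, hcard4 τ hτΔ⟩)]
    have hfil : ∀ p : ℕ, 2 ≤ p →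
        (Δ.filter (fun τ => 2 ≤ τ.card)).filter (fun τ => τ.card = p)
          = Δ.filter (fun τ => τ.card = p) := by
      intro p hp
      ext τ
      simp only [Finset.mem_filter, and_assoc]
      constructor
      · rintro ⟨h1, -, h3⟩; exact ⟨h1, h3⟩
      · rintro ⟨h1, h3⟩; exact ⟨h1, by omega, h3⟩
    have hinner : ∀ p ∈ Finset.Icc 2 4,
        ∑ τ ∈ (Δ.filter (fun τ => 2 ≤ τ.card)).filter (fun τ => τ.card = p),
          (τ.card : ℤ) * (-1) ^ (τ.card - 2)
        = ((Δ.filter (fun τ => τ.card = p)).card : ℤ) * ((p : ℤ) * (-1) ^ (p - 2)) := by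
      intro p hp
      obtain ⟨hp2, -⟩ := Finset.mem_Icc.1 hp
      rw [hfil p hp2]
      have : ∀ τ ∈ Δ.filter (fun τ => τ.card = p),
          (τ.card : ℤ) * (-1) ^ (τ.card - 2) = (p : ℤ) * (-1) ^ (p - 2) := by
        intro τ hτ
        rw [(Finset.mem_filter.1 hτ).2]
      rw [Finset.sum_congr rfl this, Finset.sum_const, nsmul_eq_mul]
    rw [Finset.sum_congr rfl hinner]
    rw [show Finset.Icc 2 4 = {2, 3, 4} from rfl]
    rw [Finset.sum_insert (by decide), Finset.sum_insert (by decide), Finset.sum_singleton]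
    norm_num [hn2, hn3, hn4]
    ring
  -- each link has chi ≤ 2
  have hlink : ∀ v ∈ verts Δ, chi (lk Δ v) ≤ 2 := by
    intro v hv
    refine chi_le_two _ (hnormal v hv) ?_
    refine Finset.mem_filter.2 ⟨hem, Finset.notMem_empty v, ?_⟩
    rw [show insert v (∅ : Finset V) = {v} from rfl]
    exact hsingleton v hv
  have hbound : ∑ v ∈ verts Δ, chi (lk Δ v) ≤ 2 * (n1 : ℤ) := by
    calc ∑ v ∈ verts Δ, chi (lk Δ v) ≤ ∑ _v ∈ verts Δ, (2 : ℤ) :=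
          Finset.sum_le_sum hlink
      _ = ((verts Δ).card : ℤ) * 2 := by rw [Finset.sum_const, nsmul_eq_mul]
      _ = 2 * (n1 : ℤ) := by rw [hverts]; ring
  rw [hsum, hfib] at hbound
  rw [hchiΔ]
  omega
end

section
/- For every vertex v of a 3-dimensional normal simplicial pseudo manifold Δ, the link lk_Δ(v) has Euler characteristic at most 2. -/
open Finset

variable {V : Type*} [DecidableEq V]

section Aux

variable {V : Type*} [DecidableEq V]

/-- One step in the graph with edge set `E`. -/
def estep (E : Finset (Finset V)) (x y : V) : Prop :=
  x ≠ y ∧ ({x, y} : Finset V) ∈ E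

lemma estep_symm {E : Finset (Finset V)} {x y : V} (h : estep E x y) : estep E y x :=
  ⟨h.1.symm, by rw [Finset.pair_comm y x]; exact h.2⟩

lemma rt_estep_symm {E : Finset (Finset V)} {x y : V}
    (h : Relation.ReflTransGen (estep E) x y) : Relation.ReflTransGen (estep E) y x := by
  induction h with
  | refl => exact .refl
  | tail _ hstep ih => exact (Relation.ReflTransGen.single (estep_symm hstep)).trans ih

lemma pair_cases {m v x y : V} (hmv : m ≠ v) (h : ({m, v} : Finset V) = {x, y}) :
    (m = x ∧ v = y) ∨ (m = y ∧ v = x) := by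
  have hm : m ∈ ({x, y} : Finset V) := by rw [← h]; simp
  have hv : v ∈ ({x, y} : Finset V) := by rw [← h]; simp
  simp only [Finset.mem_insert, Finset.mem_singleton] at hm hv
  rcases hm with hm | hm <;> rcases hv with hv | hv
  · exact absurd (hm.trans hv.symm) hmv
  · exact Or.inl ⟨hm, hv⟩
  · exact Or.inr ⟨hm, hv⟩
  · exact absurd (hm.trans hv.symm) hmv

lemma rt_decomp {E : Finset (Finset V)} {a b : V} (hab : a ≠ b) :
    ∀ {u v : V}, Relation.ReflTransGen (estep E) u v →
      Relation.ReflTransGen (estep (E.erase {a, b})) u v ∨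
      (Relation.ReflTransGen (estep (E.erase {a, b})) u a ∧
        Relation.ReflTransGen (estep (E.erase {a, b})) b v) ∨
      (Relation.ReflTransGen (estep (E.erase {a, b})) u b ∧
        Relation.ReflTransGen (estep (E.erase {a, b})) a v) := by
  intro u v h
  induction h with
  | refl => exact Or.inl .refl
  | tail h1 hstep ih =>
    rename_i m w
    by_cases he : ({m, w} : Finset V) = ({a, b} : Finset V)
    · rcases pair_cases hstep.1 he with ⟨rfl, rfl⟩ | ⟨rfl, rfl⟩
      · rcases ih with ih | ⟨ih1, _⟩ | ⟨ih1, _⟩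
        · exact Or.inr (Or.inl ⟨ih, .refl⟩)
        · exact Or.inr (Or.inl ⟨ih1, .refl⟩)
        · exact Or.inl ih1
      · rcases ih with ih | ⟨ih1, _⟩ | ⟨ih1, _⟩
        · exact Or.inr (Or.inr ⟨ih, .refl⟩)
        · exact Or.inl ih1
        · exact Or.inr (Or.inr ⟨ih1, .refl⟩)
    · have hstep' : estep (E.erase {a, b}) m w := ⟨hstep.1, Finset.mem_erase.2 ⟨he, hstep.2⟩⟩
      rcases ih with ih | ⟨ih1, ih2⟩ | ⟨ih1, ih2⟩
      · exact Or.inl (ih.tail hstep')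
      · exact Or.inr (Or.inl ⟨ih1, ih2.tail hstep'⟩)
      · exact Or.inr (Or.inr ⟨ih1, ih2.tail hstep'⟩)

/-- A connected graph on vertex set `W` has at least `W.card - 1` edges. -/
lemma conn_lb (E : Finset (Finset V)) :
    ∀ W : Finset V,
      (∀ g ∈ E, ∃ x y, x ≠ y ∧ x ∈ W ∧ y ∈ W ∧ g = {x, y}) →
      (∀ x ∈ W, ∀ y ∈ W, Relation.ReflTransGen (estep E) x y) →
      W.card ≤ E.card + 1 := by
  classical
  induction E using Finset.strongInduction with
  | _ E ih =>
    intro W hedge hconn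
    rcases Finset.eq_empty_or_nonempty E with rfl | ⟨e, he⟩
    · have hid : ∀ x y : V, Relation.ReflTransGen (estep (∅ : Finset (Finset V))) x y → x = y := by
        intro x y h
        induction h with
        | refl => rfl
        | tail _ hstep _ => exact absurd hstep.2 (Finset.notMem_empty _)
      have : W.card ≤ 1 := Finset.card_le_one.2 fun x hx y hy => hid x y (hconn x hx y hy)
      simpa using this
    obtain ⟨a, b, hab, haW, hbW, hee⟩ := hedge e he
    subst hee
    set E0 := E.erase {a, b} with hE0
    have hE0ss : E0 ⊂ E := Finset.erase_ssubset he
    have hstepW : ∀ {x y : V}, estep E x y → x ∈ W ∧ y ∈ W := by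
      intro x y hs
      obtain ⟨x', y', hxy', hx'W, hy'W, hg⟩ := hedge _ hs.2
      rcases pair_cases hs.1 hg with ⟨rfl, rfl⟩ | ⟨rfl, rfl⟩
      · exact ⟨hx'W, hy'W⟩
      · exact ⟨hy'W, hx'W⟩
    have hstepW0 : ∀ {x y : V}, estep E0 x y → x ∈ W ∧ y ∈ W :=
      fun hs => hstepW ⟨hs.1, Finset.mem_of_mem_erase hs.2⟩
    set A := W.filter (fun x => Relation.ReflTransGen (estep E0) a x) with hA
    have hAW : A ⊆ W := Finset.filter_subset _ _
    have hAmem : ∀ {y}, y ∈ W → Relation.ReflTransGen (estep E0) a y → y ∈ A :=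
      fun hyW h => Finset.mem_filter.2 ⟨hyW, h⟩
    have hArt : ∀ {y}, y ∈ A → Relation.ReflTransGen (estep E0) a y :=
      fun hy => (Finset.mem_filter.1 hy).2
    have haA : a ∈ A := hAmem haW .refl
    have hApres : ∀ {x y}, estep E0 x y → x ∈ A → y ∈ A := fun hs hx =>
      hAmem (hstepW0 hs).2 ((hArt hx).tail hs)
    have hsplit : ∀ x ∈ W, x ∈ A ∨ Relation.ReflTransGen (estep E0) b x := by
      intro x hx
      rcases rt_decomp hab (hconn a haW x hx) with h | ⟨_, h2⟩ | ⟨_, h2⟩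
      · exact Or.inl (hAmem hx h)
      · exact Or.inr h2
      · exact Or.inl (hAmem hx h2)
    set B := W \ A with hB
    have hBW : B ⊆ W := Finset.sdiff_subset
    have hBmem : ∀ {x}, x ∈ B → x ∈ W ∧ x ∉ A := fun hx => Finset.mem_sdiff.1 hx
    have hBrt : ∀ {x}, x ∈ B → Relation.ReflTransGen (estep E0) b x := by
      intro x hx
      rcases hsplit x (hBmem hx).1 with h | h
      · exact absurd h (hBmem hx).2
      · exact h
    have hBpres : ∀ {x y}, estep E0 x y → x ∈ B → y ∈ B := by
      intro x y hs hx
      refine Finset.mem_sdiff.2 ⟨(hstepW0 hs).2, fun hyA => (hBmem hx).2 ?_⟩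
      exact hApres (estep_symm hs) hyA
    set EA := E0.filter (fun g => g ⊆ A) with hEA
    set EB := E0.filter (fun g => g ⊆ B) with hEB
    have hwalk : ∀ (C : Finset V) (_ : ∀ {x y}, estep E0 x y → x ∈ C → y ∈ C),
        ∀ {x y}, Relation.ReflTransGen (estep E0) x y → x ∈ C →
          Relation.ReflTransGen (estep (E0.filter (fun g => g ⊆ C))) x y := by
      intro C hpres x y h
      induction h with
      | refl => exact fun _ => .refl
      | tail h1 hstep ih =>
        intro hx
        rename_i m w
        have hmC : m ∈ C := by
          clear ih hstep
          induction h1 with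
          | refl => exact hx
          | tail _ hstep2 ih2 => exact hpres hstep2 ih2
        have hwC : w ∈ C := hpres hstep hmC
        have : estep (E0.filter (fun g => g ⊆ C)) m w := by
          refine ⟨hstep.1, Finset.mem_filter.2 ⟨hstep.2, ?_⟩⟩
          intro z hz
          rcases Finset.mem_insert.1 hz with rfl | hz
          · exact hmC
          · rw [Finset.mem_singleton.1 hz]; exact hwC
        exact (ih hx).tail this
    -- apply IH to A
    have hssA : EA ⊂ E := lt_of_le_of_lt (Finset.filter_subset _ _) hE0ss
    have hssB : EB ⊂ E := lt_of_le_of_lt (Finset.filter_subset _ _) hE0ss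
    have hedgeA : ∀ g ∈ EA, ∃ x y, x ≠ y ∧ x ∈ A ∧ y ∈ A ∧ g = {x, y} := by
      intro g hg
      have hg0 := (Finset.mem_filter.1 hg).1
      have hgA := (Finset.mem_filter.1 hg).2
      obtain ⟨x, y, hxy, _, _, rfl⟩ := hedge g (Finset.mem_of_mem_erase hg0)
      exact ⟨x, y, hxy, hgA (by simp), hgA (by simp), rfl⟩
    have hedgeB : ∀ g ∈ EB, ∃ x y, x ≠ y ∧ x ∈ B ∧ y ∈ B ∧ g = {x, y} := by
      intro g hg
      have hg0 := (Finset.mem_filter.1 hg).1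
      have hgB := (Finset.mem_filter.1 hg).2
      obtain ⟨x, y, hxy, _, _, rfl⟩ := hedge g (Finset.mem_of_mem_erase hg0)
      exact ⟨x, y, hxy, hgB (by simp), hgB (by simp), rfl⟩
    have hconnA : ∀ x ∈ A, ∀ y ∈ A, Relation.ReflTransGen (estep EA) x y := by
      intro x hx y hy
      have h1 : Relation.ReflTransGen (estep E0) x y := (rt_estep_symm (hArt hx)).trans (hArt hy)
      exact hwalk A (fun hs h => hApres hs h) h1 hx
    have hconnB : ∀ x ∈ B, ∀ y ∈ B, Relation.ReflTransGen (estep EB) x y := by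
      intro x hx y hy
      have h1 : Relation.ReflTransGen (estep E0) x y := (rt_estep_symm (hBrt hx)).trans (hBrt hy)
      exact hwalk B (fun hs h => hBpres hs h) h1 hx
    have hcardA : A.card ≤ EA.card + 1 := ih EA hssA A hedgeA hconnA
    have hcardB : B.card ≤ EB.card + 1 := ih EB hssB B hedgeB hconnB
    have hdisjE : Disjoint EA EB := by
      rw [Finset.disjoint_left]
      intro g hgA hgB
      obtain ⟨x, y, hxy, hxA, _, rfl⟩ := hedgeA g hgA
      have hx' : x ∈ B := (Finset.mem_filter.1 hgB).2 (by simp)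
      exact (hBmem hx').2 hxA
    have hsubE : EA ∪ EB ⊆ E0 := Finset.union_subset (Finset.filter_subset _ _) (Finset.filter_subset _ _)
    have hcards : EA.card + EB.card ≤ E0.card := by
      rw [← Finset.card_union_of_disjoint hdisjE]
      exact Finset.card_le_card hsubE
    have hWAB : W.card = A.card + B.card := by
      rw [hB]
      have := Finset.card_sdiff_add_card_eq_card hAW
      omega
    have hE0card : E0.card = E.card - 1 := Finset.card_erase_of_mem he
    have hEpos : 1 ≤ E.card := Finset.card_pos.2 ⟨_, he⟩
    omega

end Aux
section Main

variable {V : Type*} [DecidableEq V]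

/-- Invariant for building a dual spanning tree `T` and a primal connecting set `T'`. -/
def BuildInv (L S : Finset (Finset V)) : Prop :=
  ∃ T T' : Finset (Finset V),
    (∀ g ∈ T, g ∈ L ∧ g.card = 2) ∧
    (∀ g ∈ T', g ∈ L ∧ g.card = 2 ∧ ∃ τ ∈ S, g ⊆ τ) ∧
    Disjoint T T' ∧
    (∀ g ∈ T, ∀ τ ∈ L, τ.card = 3 → g ⊆ τ → τ ∈ S) ∧
    T.card + 1 = S.card ∧
    (∀ x ∈ S.biUnion id, ∀ y ∈ S.biUnion id, Relation.ReflTransGen (estep T') x y)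

lemma inv_init (L : Finset (Finset V)) (hc : IsComplex L) (σ : Finset V)
    (hσ : σ ∈ L) (h3 : σ.card = 3) : BuildInv L {σ} := by
  obtain ⟨a, b, c, hab, hac, hbc, rfl⟩ := Finset.card_eq_three.1 h3
  refine ⟨∅, {{a, b}, {a, c}}, by simp, ?_, by simp, by simp, by simp, ?_⟩
  · intro g hg
    rcases Finset.mem_insert.1 hg with rfl | hg
    · refine ⟨hc _ hσ _ ?_, Finset.card_pair hab, {a, b, c}, by simp, ?_⟩
      · intro z hz; simp at hz ⊢; tauto
      · intro z hz; simp at hz ⊢; tauto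
    · rw [Finset.mem_singleton.1 hg]
      refine ⟨hc _ hσ _ ?_, Finset.card_pair hac, {a, b, c}, by simp, ?_⟩
      · intro z hz; simp at hz ⊢; tauto
      · intro z hz; simp at hz ⊢; tauto
  · intro x hx y hy
    have hx' : x ∈ ({a, b, c} : Finset V) := by
      obtain ⟨τ, hτ, hxτ⟩ := Finset.mem_biUnion.1 hx
      rw [Finset.mem_singleton.1 hτ] at hxτ; exact hxτ
    have hy' : y ∈ ({a, b, c} : Finset V) := by
      obtain ⟨τ, hτ, hyτ⟩ := Finset.mem_biUnion.1 hy
      rw [Finset.mem_singleton.1 hτ] at hyτ; exact hyτ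
    have hstep_ba : estep ({{a, b}, {a, c}} : Finset (Finset V)) b a :=
      ⟨hab.symm, by rw [Finset.pair_comm b a]; simp⟩
    have hstep_ca : estep ({{a, b}, {a, c}} : Finset (Finset V)) c a :=
      ⟨fun h => hac h.symm, by rw [Finset.pair_comm c a]; simp⟩
    have hkey : ∀ z ∈ ({a, b, c} : Finset V),
        Relation.ReflTransGen (estep ({{a, b}, {a, c}} : Finset (Finset V))) z a := by
      intro z hz
      simp only [Finset.mem_insert, Finset.mem_singleton] at hz
      rcases hz with rfl | rfl | rfl
      · exact .refl
      · exact .single hstep_ba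
      · exact .single hstep_ca
    exact (hkey x hx').trans (rt_estep_symm (hkey y hy'))

lemma inv_step (L S : Finset (Finset V)) (hc : IsComplex L) (hnb : NonBranching L 2)
    (hS : S ⊆ L.filter (fun σ => σ.card = 3)) (hInv : BuildInv L S)
    (σ ρ : Finset V) (hσL : σ ∈ L) (hσ3 : σ.card = 3) (hσS : σ ∉ S) (hρS : ρ ∈ S)
    (hcut : (σ ∩ ρ).card = 2) : BuildInv L (insert σ S) := by
  obtain ⟨T, T', hT, hT', hdisj, hTfac, hTcard, hconn⟩ := hInv
  set e := σ ∩ ρ with he_def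
  have heσ : e ⊆ σ := Finset.inter_subset_left
  have heρ : e ⊆ ρ := Finset.inter_subset_right
  have heL : e ∈ L := hc σ hσL e heσ
  have hsd : (σ \ e).card = 1 := by rw [Finset.card_sdiff_of_subset heσ, hσ3, hcut]
  obtain ⟨c, hc1⟩ := Finset.card_eq_one.1 hsd
  have hcmem : c ∈ σ \ e := by rw [hc1]; exact Finset.mem_singleton_self c
  have hcσ : c ∈ σ := (Finset.mem_sdiff.1 hcmem).1
  have hce : c ∉ e := (Finset.mem_sdiff.1 hcmem).2
  obtain ⟨a, b, hab, heab⟩ := Finset.card_eq_two.1 hcut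
  have hae : a ∈ e := by rw [heab]; simp
  have hbe : b ∈ e := by rw [heab]; simp
  have hca : c ≠ a := fun h => hce (h ▸ hae)
  have hcb : c ≠ b := fun h => hce (h ▸ hbe)
  have haσ : a ∈ σ := heσ hae
  have haρ : a ∈ ρ := heρ hae
  have hf1σ : ({a, c} : Finset V) ⊆ σ := by
    intro z hz; rcases Finset.mem_insert.1 hz with rfl | hz
    · exact haσ
    · rw [Finset.mem_singleton.1 hz]; exact hcσ
  have hf2σ : ({b, c} : Finset V) ⊆ σ := by
    intro z hz; rcases Finset.mem_insert.1 hz with rfl | hz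
    · exact heσ hbe
    · rw [Finset.mem_singleton.1 hz]; exact hcσ
  have hf1L : ({a, c} : Finset V) ∈ L := hc σ hσL _ hf1σ
  have hf2L : ({b, c} : Finset V) ∈ L := hc σ hσL _ hf2σ
  have hf12 : ({a, c} : Finset V).card = 2 := Finset.card_pair (fun h => hca h.symm)
  have hf22 : ({b, c} : Finset V).card = 2 := Finset.card_pair (fun h => hcb h.symm)
  have hσeq : insert c e = σ := by
    apply Finset.eq_of_subset_of_card_le
    · intro x hx; rcases Finset.mem_insert.1 hx with rfl | hx
      · exact hcσ
      · exact heσ hx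
    · rw [Finset.card_insert_of_notMem hce, hσ3, hcut]
  have hρF := hS hρS
  have hρL : ρ ∈ L := (Finset.mem_filter.1 hρF).1
  have hρ3 : ρ.card = 3 := (Finset.mem_filter.1 hρF).2
  have hσρ : σ ≠ ρ := fun h => hσS (h ▸ hρS)
  have hfe : ∀ τ ∈ L, τ.card = 3 → e ⊆ τ → τ = σ ∨ τ = ρ := by
    intro τ hτL hτ3 heτ
    have h2 := hnb e heL hcut
    have hsub : ({σ, ρ} : Finset (Finset V)) ⊆ L.filter (fun τ => τ.card = 3 ∧ e ⊆ τ) := by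
      intro x hx; rcases Finset.mem_insert.1 hx with rfl | hx
      · exact Finset.mem_filter.2 ⟨hσL, hσ3, heσ⟩
      · rw [Finset.mem_singleton.1 hx]; exact Finset.mem_filter.2 ⟨hρL, hρ3, heρ⟩
    have heq := Finset.eq_of_subset_of_card_le hsub (by rw [h2, Finset.card_pair hσρ])
    have hτm : τ ∈ ({σ, ρ} : Finset (Finset V)) := by
      rw [heq]; exact Finset.mem_filter.2 ⟨hτL, hτ3, heτ⟩
    simpa using hτm
  have heT : e ∉ T := fun h => hσS (hTfac e h σ hσL hσ3 heσ)
  have hf1T : ({a, c} : Finset V) ∉ T := fun h => hσS (hTfac _ h σ hσL hσ3 hf1σ)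
  have hf2T : ({b, c} : Finset V) ∉ T := fun h => hσS (hTfac _ h σ hσL hσ3 hf2σ)
  have hef1 : e ≠ ({a, c} : Finset V) := fun h => hce (by rw [h]; simp)
  have hef2 : e ≠ ({b, c} : Finset V) := fun h => hce (by rw [h]; simp)
  set Tn := insert ({a, c} : Finset V) (insert ({b, c} : Finset V) (T'.erase e)) with hTn
  refine ⟨insert e T, Tn, ?_, ?_, ?_, ?_, ?_, ?_⟩
  · intro g hg
    rcases Finset.mem_insert.1 hg with rfl | hg
    · exact ⟨heL, hcut⟩
    · exact hT g hg
  · intro g hg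
    rcases Finset.mem_insert.1 hg with rfl | hg
    · exact ⟨hf1L, hf12, σ, Finset.mem_insert_self _ _, hf1σ⟩
    rcases Finset.mem_insert.1 hg with rfl | hg
    · exact ⟨hf2L, hf22, σ, Finset.mem_insert_self _ _, hf2σ⟩
    · obtain ⟨h1, h2, τ, hτ, h3⟩ := hT' g (Finset.mem_of_mem_erase hg)
      exact ⟨h1, h2, τ, Finset.mem_insert_of_mem hτ, h3⟩
  · rw [Finset.disjoint_left]
    intro g hg hg'
    rcases Finset.mem_insert.1 hg with rfl | hgT
    · rcases Finset.mem_insert.1 hg' with h | h'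
      · exact hef1 h
      rcases Finset.mem_insert.1 h' with h | h
      · exact hef2 h
      · exact (Finset.mem_erase.1 h).1 rfl
    · rcases Finset.mem_insert.1 hg' with rfl | h'
      · exact hf1T hgT
      rcases Finset.mem_insert.1 h' with rfl | h
      · exact hf2T hgT
      · exact Finset.disjoint_left.1 hdisj hgT (Finset.mem_of_mem_erase h)
  · intro g hg τ hτL hτ3 hgτ
    rcases Finset.mem_insert.1 hg with rfl | hgT
    · rcases hfe τ hτL hτ3 hgτ with rfl | rfl
      · exact Finset.mem_insert_self _ _
      · exact Finset.mem_insert_of_mem hρS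
    · exact Finset.mem_insert_of_mem (hTfac g hgT τ hτL hτ3 hgτ)
  · rw [Finset.card_insert_of_notMem heT, Finset.card_insert_of_notMem hσS]
    omega
  · have hstep_ac : estep Tn a c := ⟨fun h => hca h.symm, Finset.mem_insert_self _ _⟩
    have hstep_cb : estep Tn c b := by
      refine ⟨hcb, ?_⟩
      rw [Finset.pair_comm]
      exact Finset.mem_insert_of_mem (Finset.mem_insert_self _ _)
    have hab' : Relation.ReflTransGen (estep Tn) a b :=
      (Relation.ReflTransGen.single hstep_ac).tail hstep_cb
    have htrans : ∀ {x y : V}, Relation.ReflTransGen (estep T') x y →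
        Relation.ReflTransGen (estep Tn) x y := by
      intro x y h
      induction h with
      | refl => exact .refl
      | tail h1 hstep ih =>
        rename_i m w
        by_cases hme : ({m, w} : Finset V) = e
        · rcases pair_cases hstep.1 (hme.trans heab) with ⟨rfl, rfl⟩ | ⟨rfl, rfl⟩
          · exact ih.trans hab'
          · exact ih.trans (rt_estep_symm hab')
        · refine ih.tail ⟨hstep.1, ?_⟩
          exact Finset.mem_insert_of_mem (Finset.mem_insert_of_mem
            (Finset.mem_erase.2 ⟨hme, hstep.2⟩))
    have haV : a ∈ S.biUnion id := Finset.mem_biUnion.2 ⟨ρ, hρS, haρ⟩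
    have hxa : ∀ x ∈ (insert σ S).biUnion id, Relation.ReflTransGen (estep Tn) x a := by
      intro x hx
      obtain ⟨τ, hτ, hxτ⟩ := Finset.mem_biUnion.1 hx
      simp only [id_eq] at hxτ
      rcases Finset.mem_insert.1 hτ with rfl | hτS
      · have hx' : x ∈ insert c e := by rw [hσeq]; exact hxτ
        rcases Finset.mem_insert.1 hx' with rfl | hxe
        · exact .single (estep_symm hstep_ac)
        · have hxS : x ∈ S.biUnion id := Finset.mem_biUnion.2 ⟨ρ, hρS, heρ hxe⟩
          exact htrans (hconn x hxS a haV)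
      · exact htrans (hconn x (Finset.mem_biUnion.2 ⟨τ, hτS, hxτ⟩) a haV)
    intro x hx y hy
    exact (hxa x hx).trans (rt_estep_symm (hxa y hy))

lemma rt_cross {α : Type*} [DecidableEq α] {r : α → α → Prop} (S : Finset α) :
    ∀ {x y : α}, Relation.ReflTransGen r x y → x ∈ S → y ∉ S →
      ∃ u ∈ S, ∃ w, w ∉ S ∧ r u w := by
  intro x y h
  induction h with
  | refl => exact fun hx hy => absurd hx hy
  | tail h1 hr ih =>
    intro hx hy
    rename_i m w
    by_cases hm : m ∈ S
    · exact ⟨m, hm, w, hy, hr⟩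
    · exact ih hx hm

lemma inv_grow (L : Finset (Finset V)) (hc : IsComplex L) (hnb : NonBranching L 2)
    (hsc : StronglyConnected L 2) :
    ∀ n (S : Finset (Finset V)), S ⊆ L.filter (fun σ => σ.card = 3) → S.Nonempty → BuildInv L S →
      (L.filter (fun σ => σ.card = 3)).card ≤ S.card + n →
      BuildInv L (L.filter (fun σ => σ.card = 3)) := by
  intro n
  induction n with
  | zero =>
    intro S hSF _ hInv hcard
    have : S = L.filter (fun σ => σ.card = 3) :=
      Finset.eq_of_subset_of_card_le hSF (by omega)
    rwa [← this]
  | succ n ihn =>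
    intro S hSF hSne hInv hcard
    by_cases hFS : L.filter (fun σ => σ.card = 3) ⊆ S
    · have : S = L.filter (fun σ => σ.card = 3) := Finset.Subset.antisymm hSF hFS
      rwa [← this]
    · obtain ⟨τ, hτF, hτS⟩ := Finset.not_subset.1 hFS
      obtain ⟨σ₀, hσ₀⟩ := hSne
      have hσ₀F := hSF hσ₀
      have h1 := hsc σ₀ (Finset.mem_filter.1 hσ₀F).1 (Finset.mem_filter.1 hσ₀F).2
        τ (Finset.mem_filter.1 hτF).1 (Finset.mem_filter.1 hτF).2
      obtain ⟨u, huS, w, hwS, hadj⟩ := rt_cross S h1 hσ₀ hτS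
      obtain ⟨huL, hwL, hu3, hw3, hcut⟩ := hadj
      have hnew := inv_step L S hc hnb hSF hInv w u hwL hw3 hwS huS (by rwa [Finset.inter_comm])
      refine ihn (insert w S) ?_ ⟨w, Finset.mem_insert_self _ _⟩ hnew ?_
      · exact Finset.insert_subset (Finset.mem_filter.2 ⟨hwL, hw3⟩) hSF
      · rw [Finset.card_insert_of_notMem hwS]; omega

lemma chi_eq_s12 (L : Finset (Finset V)) (hpure : IsPure L 2) :
    chi L = ((L.filter fun σ => σ.card = 1).card : ℤ)
      - ((L.filter fun σ => σ.card = 2).card : ℤ)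
      + ((L.filter fun σ => σ.card = 3).card : ℤ) := by
  have hle : ∀ σ ∈ L, σ.card ≤ 3 := by
    intro σ hσ
    obtain ⟨ρ, _, hsub, h3⟩ := hpure σ hσ
    calc σ.card ≤ ρ.card := Finset.card_le_card hsub
    _ = 3 := h3
  have hsplit : L.filter (fun σ => σ ≠ ∅) =
      ((L.filter fun σ => σ.card = 1) ∪ (L.filter fun σ => σ.card = 2)) ∪
        (L.filter fun σ => σ.card = 3) := by
    ext σ
    simp only [Finset.mem_filter, Finset.mem_union]
    constructor
    · rintro ⟨h1, h2⟩
      have h3 : σ.card ≠ 0 := fun h => h2 (Finset.card_eq_zero.1 h)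
      have h4 := hle σ h1
      have : σ.card = 1 ∨ σ.card = 2 ∨ σ.card = 3 := by omega
      tauto
    · rintro ((⟨h, hcd⟩ | ⟨h, hcd⟩) | ⟨h, hcd⟩) <;>
        exact ⟨h, fun he => by rw [he] at hcd; simp at hcd⟩
  have hd1 : Disjoint (L.filter fun σ => σ.card = 1) (L.filter fun σ => σ.card = 2) := by
    rw [Finset.disjoint_left]
    intro g h1 h2
    have := (Finset.mem_filter.1 h1).2
    have := (Finset.mem_filter.1 h2).2
    omega
  have hd2 : Disjoint ((L.filter fun σ => σ.card = 1) ∪ (L.filter fun σ => σ.card = 2))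
      (L.filter fun σ => σ.card = 3) := by
    rw [Finset.disjoint_left]
    intro g h1 h2
    have h3 := (Finset.mem_filter.1 h2).2
    rcases Finset.mem_union.1 h1 with h | h <;>
      · have := (Finset.mem_filter.1 h).2; omega
  have e1 : ∑ σ ∈ L.filter (fun σ => σ.card = 1), (-1 : ℤ) ^ (σ.card - 1)
      = ((L.filter fun σ => σ.card = 1).card : ℤ) := by
    rw [Finset.sum_congr rfl (fun σ h => by rw [(Finset.mem_filter.1 h).2])]
    simp
  have e2 : ∑ σ ∈ L.filter (fun σ => σ.card = 2), (-1 : ℤ) ^ (σ.card - 1)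
      = -((L.filter fun σ => σ.card = 2).card : ℤ) := by
    rw [Finset.sum_congr rfl (fun σ h => by rw [(Finset.mem_filter.1 h).2])]
    simp
  have e3 : ∑ σ ∈ L.filter (fun σ => σ.card = 3), (-1 : ℤ) ^ (σ.card - 1)
      = ((L.filter fun σ => σ.card = 3).card : ℤ) := by
    rw [Finset.sum_congr rfl (fun σ h => by rw [(Finset.mem_filter.1 h).2])]
    simp
  unfold chi
  rw [hsplit, Finset.sum_union hd2, Finset.sum_union hd1, e1, e2, e3]
  ring

lemma surface_chi (L : Finset (Finset V)) (h : PseudoManifold L 2)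
    (hne : ∃ σ ∈ L, σ.card = 3) : chi L ≤ 2 := by
  obtain ⟨hc, hpure, hnb, hsc⟩ := h
  obtain ⟨σ₀, hσ₀L, hσ₀3⟩ := hne
  have hσ₀F : σ₀ ∈ L.filter (fun σ => σ.card = 3) := Finset.mem_filter.2 ⟨hσ₀L, hσ₀3⟩
  have hinvF : BuildInv L (L.filter (fun σ => σ.card = 3)) := by
    refine inv_grow L hc hnb hsc (L.filter (fun σ => σ.card = 3)).card {σ₀} ?_
      ⟨σ₀, Finset.mem_singleton_self _⟩ (inv_init L hc σ₀ hσ₀L hσ₀3) (by simp)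
    intro x hx
    rw [Finset.mem_singleton.1 hx]
    exact hσ₀F
  obtain ⟨T, T', hT, hT', hdisj, hTfac, hTcard, hconn⟩ := hinvF
  set F := L.filter (fun σ => σ.card = 3) with hF
  set VF := F.biUnion id with hVF
  have hlb : VF.card ≤ T'.card + 1 := by
    apply conn_lb
    · intro g hg
      obtain ⟨hgL, hg2, τ, hτ, hgτ⟩ := hT' g hg
      obtain ⟨x, y, hxy, rfl⟩ := Finset.card_eq_two.1 hg2
      refine ⟨x, y, hxy, ?_, ?_, rfl⟩
      · exact Finset.mem_biUnion.2 ⟨τ, hτ, hgτ (by simp)⟩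
      · exact Finset.mem_biUnion.2 ⟨τ, hτ, hgτ (by simp)⟩
    · exact hconn
  have hTE : T ∪ T' ⊆ L.filter (fun σ => σ.card = 2) := by
    intro g hg
    rcases Finset.mem_union.1 hg with hg | hg
    · exact Finset.mem_filter.2 ⟨(hT g hg).1, (hT g hg).2⟩
    · exact Finset.mem_filter.2 ⟨(hT' g hg).1, (hT' g hg).2.1⟩
  have hEcard : T.card + T'.card ≤ (L.filter fun σ => σ.card = 2).card := by
    rw [← Finset.card_union_of_disjoint hdisj]
    exact Finset.card_le_card hTE
  have himg : L.filter (fun σ => σ.card = 1) = VF.image (fun x => ({x} : Finset V)) := by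
    ext g
    simp only [Finset.mem_filter, Finset.mem_image]
    constructor
    · rintro ⟨hgL, hg1⟩
      obtain ⟨x, rfl⟩ := Finset.card_eq_one.1 hg1
      refine ⟨x, ?_, rfl⟩
      obtain ⟨ρ, hρL, hsub, hρ3⟩ := hpure {x} hgL
      exact Finset.mem_biUnion.2 ⟨ρ, Finset.mem_filter.2 ⟨hρL, hρ3⟩,
        hsub (Finset.mem_singleton_self x)⟩
    · rintro ⟨x, hx, rfl⟩
      obtain ⟨τ, hτF, hxτ⟩ := Finset.mem_biUnion.1 hx
      simp only [id_eq] at hxτ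
      have hτL : τ ∈ L := (Finset.mem_filter.1 hτF).1
      exact ⟨hc τ hτL {x} (Finset.singleton_subset_iff.2 hxτ), Finset.card_singleton x⟩
  have hWcard : (L.filter fun σ => σ.card = 1).card = VF.card := by
    rw [himg, Finset.card_image_of_injective _ Finset.singleton_injective]
  rw [chi_eq_s12 L hpure]
  rw [← hF]
  omega

end Main

/-- Every vertex link of a 3-dimensional normal simplicial
pseudo manifold has Euler characteristic at most 2. -/
theorem stmt12 (Δ : Finset (Finset V)) (hpm : PseudoManifold Δ 3)
    (hnormal : Normal3 Δ) : ∀ v ∈ verts Δ, chi (lk Δ v) ≤ 2 := by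
  intro v hv
  have hL := hnormal v hv
  apply surface_chi _ hL
  obtain ⟨τ, hτΔ, hvτ⟩ := Finset.mem_biUnion.1 hv
  simp only [id_eq] at hvτ
  obtain ⟨hcΔ, _, _, _⟩ := hpm
  have hvs : ({v} : Finset V) ∈ Δ := hcΔ τ hτΔ {v} (Finset.singleton_subset_iff.2 hvτ)
  have hempty : (∅ : Finset V) ∈ lk Δ v := by
    refine Finset.mem_filter.2 ⟨hcΔ τ hτΔ ∅ (Finset.empty_subset _), ?_, ?_⟩
    · simp
    · simpa using hvs
  obtain ⟨hcL, hpureL, _, _⟩ := hL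
  obtain ⟨ρ, hρ, _, hρ3⟩ := hpureL ∅ hempty
  exact ⟨ρ, hρ, hρ3⟩
end
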